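/- arXiv:2501.03367 — 3 statements merged into one kernel-verified Lean document; each statement's English description precedes it below -/
import Mathlib

section
/- For every θ ∈ ℝ^J, φ ∈ ℝ^K and j ∈ {1,…,J}, the real-valued map s ↦ D(η‖ω(θ⟨j↦s⟩, φ)) is differentiable at s = θ_j with derivative ⟨G_j⟩_{η(φ)} − ⟨G_j⟩_{ρ(θ)}, i.e., Tr[G_j η(φ)] − Tr[G_j ρ(θ)] (both traces are real). -/
open MeasureTheory Matrix
open scoped ComplexOrder

noncomputable section

attribute [local instance] Matrix.normedAddCommGroup Matrix.normedSpace

/-- Square complex matrices. -/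
abbrev Mat (n : ℕ) := Matrix (Fin n) (Fin n) ℂ

/-- The parameterized Hamiltonian `G(θ) = ∑ j, θ j • G j`. -/
def Gm {n J : ℕ} (G : Fin J → Mat n) (θ : Fin J → ℝ) : Mat n := ∑ j, (θ j : ℂ) • G j

/-- The parameterized Hamiltonian `H(φ) = ∑ k, φ k • H k`. -/
def Hm {n K : ℕ} (H : Fin K → Mat n) (φ : Fin K → ℝ) : Mat n := ∑ k, (φ k : ℂ) • H k

/-- The partition function `Z(θ) = Tr[exp (−G(θ))]` (a positive real). -/
def Zpf {n J : ℕ} (G : Fin J → Mat n) (θ : Fin J → ℝ) : ℝ :=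
  (Matrix.trace (NormedSpace.exp (-(Gm G θ)))).re

/-- The quantum Boltzmann machine `ρ(θ) = exp(−G(θ))/Z(θ)`. -/
def qbm {n J : ℕ} (G : Fin J → Mat n) (θ : Fin J → ℝ) : Mat n :=
  ((Zpf G θ : ℂ))⁻¹ • NormedSpace.exp (-(Gm G θ))

/-- The unitary `exp(−i H(φ))`. -/
def uH {n K : ℕ} (H : Fin K → Mat n) (φ : Fin K → ℝ) : Mat n :=
  NormedSpace.exp (-(Complex.I • Hm H φ))

/-- The unitary `exp(i H(φ))`. -/
def uH' {n K : ℕ} (H : Fin K → Mat n) (φ : Fin K → ℝ) : Mat n :=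
  NormedSpace.exp (Complex.I • Hm H φ)

/-- The evolved quantum Boltzmann machine `ω(θ,φ) = exp(−iH(φ)) ρ(θ) exp(iH(φ))`. -/
def eqbm {n J K : ℕ} (G : Fin J → Mat n) (H : Fin K → Mat n)
    (θ : Fin J → ℝ) (φ : Fin K → ℝ) : Mat n :=
  uH H φ * qbm G θ * uH' H φ

/-- The matrix logarithm of a Hermitian matrix, obtained by applying the real logarithm to
the eigenvalues in a spectral decomposition (junk value `0` for non-Hermitian matrices). -/
def mlog {n : ℕ} (A : Mat n) : Mat n :=
  if hA : A.IsHermitian then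
    (hA.eigenvectorUnitary : Mat n) *
      Matrix.diagonal (fun i => (Real.log (hA.eigenvalues i) : ℂ)) *
      star (hA.eigenvectorUnitary : Mat n)
  else 0

/-- The quantum relative entropy `D(ω‖τ) = Tr[ω (ln ω − ln τ)]` (a real number). -/
def relEnt {n : ℕ} (A B : Mat n) : ℝ :=
  (Matrix.trace (A * (mlog A - mlog B))).re


-- ===== auxiliary lemmas =====

section FunCalc
open Polynomial

lemma mconj_pow {n : ℕ} (V W M : Mat n) (hVW : V * W = 1) (hWV : W * V = 1) (k : ℕ) :
    (V * M * W) ^ k = V * M ^ k * W := by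
  induction k with
  | zero => simp [hVW]
  | succ k ih =>
      rw [pow_succ, ih, pow_succ]
      have h : W * (V * (M * W)) = M * W := by rw [← mul_assoc, hWV, one_mul]
      simp only [mul_assoc, h]

lemma aeval_conj {n : ℕ} (V W M : Mat n) (hVW : V * W = 1) (hWV : W * V = 1) (p : ℂ[X]) :
    Polynomial.aeval (V * M * W) p = V * Polynomial.aeval M p * W := by
  induction p using Polynomial.induction_on' with
  | add p q hp hq => simp [hp, hq, mul_add, add_mul]
  | monomial k a =>
      rw [aeval_monomial, aeval_monomial, mconj_pow V W M hVW hWV]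
      simp [Algebra.algebraMap_eq_smul_one, smul_mul_assoc, mul_smul_comm]

lemma aeval_diagonal {n : ℕ} (d : Fin n → ℂ) (p : ℂ[X]) :
    Polynomial.aeval (Matrix.diagonal d) p
      = Matrix.diagonal (fun i => Polynomial.eval (d i) p) := by
  induction p using Polynomial.induction_on' with
  | add p q hp hq => simp [hp, hq, Matrix.diagonal_add]
  | monomial k a =>
      rw [aeval_monomial, Matrix.algebraMap_eq_diagonal, Matrix.diagonal_pow,
        Matrix.diagonal_mul_diagonal]
      simp [eval_monomial]

lemma funcalc {n : ℕ} (V W : Mat n) (d e : Fin n → ℝ)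
    (hV1 : V * Vᴴ = 1) (hV2 : Vᴴ * V = 1) (hW1 : W * Wᴴ = 1) (hW2 : Wᴴ * W = 1)
    (hEq : V * Matrix.diagonal (fun i => (d i : ℂ)) * Vᴴ
          = W * Matrix.diagonal (fun i => (e i : ℂ)) * Wᴴ)
    (f : ℝ → ℝ) :
    V * Matrix.diagonal (fun i => (f (d i) : ℂ)) * Vᴴ
      = W * Matrix.diagonal (fun i => (f (e i) : ℂ)) * Wᴴ := by
  classical
  set S : Finset ℝ := (Finset.univ.image d) ∪ (Finset.univ.image e) with hS
  set p : ℝ[X] := Lagrange.interpolate S id f with hp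
  have hnode : ∀ x ∈ S, p.eval x = f x := fun x hx =>
    Lagrange.eval_interpolate_at_node f (Function.injective_id.injOn) hx
  set q : ℂ[X] := p.map (algebraMap ℝ ℂ) with hq
  have hqeval : ∀ x ∈ S, q.eval (x : ℂ) = (f x : ℂ) := by
    intro x hx
    rw [hq, Polynomial.eval_map]
    have : ((x : ℝ) : ℂ) = algebraMap ℝ ℂ x := rfl
    rw [this, Polynomial.eval₂_at_apply, hnode x hx]
    rfl
  have hd : ∀ i, d i ∈ S := fun i => Finset.mem_union_left _ (Finset.mem_image_of_mem d (Finset.mem_univ i))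
  have he : ∀ i, e i ∈ S := fun i => Finset.mem_union_right _ (Finset.mem_image_of_mem e (Finset.mem_univ i))
  have h1 : V * Matrix.diagonal (fun i => (f (d i) : ℂ)) * Vᴴ
      = Polynomial.aeval (V * Matrix.diagonal (fun i => (d i : ℂ)) * Vᴴ) q := by
    rw [aeval_conj _ _ _ hV1 hV2, aeval_diagonal]
    have : (fun i => (f (d i) : ℂ)) = fun i => Polynomial.eval ((d i : ℝ) : ℂ) q :=
      funext fun i => (hqeval _ (hd i)).symm
    rw [this]
  have h2 : W * Matrix.diagonal (fun i => (f (e i) : ℂ)) * Wᴴ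
      = Polynomial.aeval (W * Matrix.diagonal (fun i => (e i : ℂ)) * Wᴴ) q := by
    rw [aeval_conj _ _ _ hW1 hW2, aeval_diagonal]
    have : (fun i => (f (e i) : ℂ)) = fun i => Polynomial.eval ((e i : ℝ) : ℂ) q :=
      funext fun i => (hqeval _ (he i)).symm
    rw [this]
  rw [h1, h2, hEq]

lemma herm_conj_diag {n : ℕ} (W : Mat n) (e : Fin n → ℝ) :
    (W * Matrix.diagonal (fun i => (e i : ℂ)) * Wᴴ).IsHermitian := by
  have : (W * Matrix.diagonal (fun i => (e i : ℂ)) * Wᴴ)ᴴ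
      = W * Matrix.diagonal (fun i => (e i : ℂ)) * Wᴴ := by
    rw [Matrix.conjTranspose_mul, Matrix.conjTranspose_mul, Matrix.conjTranspose_conjTranspose,
      Matrix.diagonal_conjTranspose]
    have : star (fun i => (e i : ℂ)) = fun i => (e i : ℂ) := by
      funext i; simp [Complex.conj_ofReal]
    rw [this, mul_assoc]
  exact this

lemma mlog_conj_diag {n : ℕ} (W : Mat n) (e : Fin n → ℝ)
    (hW1 : W * Wᴴ = 1) (hW2 : Wᴴ * W = 1) :
    mlog (W * Matrix.diagonal (fun i => (e i : ℂ)) * Wᴴ)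
      = W * Matrix.diagonal (fun i => (Real.log (e i) : ℂ)) * Wᴴ := by
  have hM := herm_conj_diag W e
  rw [mlog, dif_pos hM, Matrix.star_eq_conjTranspose]
  have hV1 : (hM.eigenvectorUnitary : Mat n) * (hM.eigenvectorUnitary : Mat n)ᴴ = 1 :=
    (Matrix.mem_unitaryGroup_iff).mp hM.eigenvectorUnitary.2
  have hV2 : (hM.eigenvectorUnitary : Mat n)ᴴ * (hM.eigenvectorUnitary : Mat n) = 1 :=
    (Matrix.mem_unitaryGroup_iff').mp hM.eigenvectorUnitary.2
  have hEq : (hM.eigenvectorUnitary : Mat n) * Matrix.diagonal (fun i => ((hM.eigenvalues i : ℝ) : ℂ))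
        * (hM.eigenvectorUnitary : Mat n)ᴴ
      = W * Matrix.diagonal (fun i => (e i : ℂ)) * Wᴴ := by
    exact (hM.spectral_theorem).symm
  exact funcalc _ W hM.eigenvalues e hV1 hV2 hW1 hW2 hEq Real.log

end FunCalc

section SeriesDeriv

attribute [local instance] Matrix.linftyOpNormedAddCommGroup Matrix.linftyOpNormedRing
  Matrix.linftyOpNormedAlgebra Matrix.linftyOpNormedSpace

variable {n : ℕ}

lemma entry_norm_le (M : Mat n) (i j : Fin n) : ‖M i j‖ ≤ ‖M‖ := by
  rw [Matrix.linfty_opNorm_def]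
  have h1 : ‖M i j‖₊ ≤ ∑ k, ‖M i k‖₊ :=
    Finset.single_le_sum (f := fun k => ‖M i k‖₊) (fun _ _ => zero_le) (Finset.mem_univ j)
  have h2 : (∑ k, ‖M i k‖₊) ≤ Finset.univ.sup fun i => ∑ k, ‖M i k‖₊ :=
    Finset.le_sup (f := fun i => ∑ k, ‖M i k‖₊) (Finset.mem_univ i)
  exact_mod_cast h1.trans h2

lemma trace_norm_le (M : Mat n) : ‖Matrix.trace M‖ ≤ n * ‖M‖ := by
  calc ‖Matrix.trace M‖ = ‖∑ i, M i i‖ := rfl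
    _ ≤ ∑ i : Fin n, ‖M i i‖ := norm_sum_le _ _
    _ ≤ ∑ _i : Fin n, ‖M‖ := Finset.sum_le_sum fun i _ => entry_norm_le M i i
    _ = n * ‖M‖ := by simp [Finset.sum_const, Finset.card_univ]

lemma hasDerivAt_affine (A B : Mat n) (s : ℝ) :
    HasDerivAt (fun s : ℝ => A + s • B) B s := by
  have h := ((hasDerivAt_id' s).smul_const B).const_add A
  rw [one_smul] at h
  exact h

lemma hasDerivAt_matpow (A B : Mat n) (k : ℕ) (s : ℝ) :
    HasDerivAt (fun s : ℝ => (A + s • B) ^ k)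
      (∑ i ∈ Finset.range k, (A + s • B) ^ i * B * (A + s • B) ^ (k - 1 - i)) s := by
  induction k with
  | zero =>
      simp only [pow_zero, Finset.range_zero, Finset.sum_empty]
      exact hasDerivAt_const s (1 : Mat n)
  | succ k ih =>
      have h : HasDerivAt (fun s : ℝ => (A + s • B) * (A + s • B) ^ k)
          (B * (A + s • B) ^ k + (A + s • B) * ∑ i ∈ Finset.range k, (A + s • B) ^ i * B * (A + s • B) ^ (k - 1 - i)) s :=
        (hasDerivAt_affine A B s).mul ih
      have hrw : (fun s : ℝ => (A + s • B) * (A + s • B) ^ k)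
          = fun s : ℝ => (A + s • B) ^ (k + 1) := by
        funext t; rw [← pow_succ']
      rw [hrw] at h
      convert h using 1
      rw [Finset.sum_range_succ', add_comm]
      congr 1
      · simp
      · rw [Finset.mul_sum]
        apply Finset.sum_congr rfl
        intro i hi
        have h2 : (k:ℕ) + 1 - 1 - (i+1) = k - 1 - i := by omega
        rw [h2, pow_succ']
        simp only [mul_assoc]
  

/-- trace as a continuous linear map -/
def tCLM (n : ℕ) : Mat n →L[ℂ] ℂ :=
  LinearMap.toContinuousLinearMap (Matrix.traceLinearMap (Fin n) ℂ ℂ)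

lemma tCLM_apply (M : Mat n) : tCLM n M = Matrix.trace M := rfl

def bCLM (B : Mat n) : Mat n →L[ℂ] ℂ :=
  LinearMap.toContinuousLinearMap
    ((Matrix.traceLinearMap (Fin n) ℂ ℂ).comp (LinearMap.mulLeft ℂ B))

lemma bCLM_apply (B M : Mat n) : bCLM B M = Matrix.trace (B * M) := rfl

lemma hasDerivAt_trace_pow (A B : Mat n) (k : ℕ) (s : ℝ) :
    HasDerivAt (fun s : ℝ => Matrix.trace ((A + s • B) ^ k))
      (k • Matrix.trace (B * (A + s • B) ^ (k - 1))) s := by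
  have h := ((tCLM n).restrictScalars ℝ).hasFDerivAt.comp_hasDerivAt s
    (hasDerivAt_matpow A B k s)
  have hval : (tCLM n) (∑ i ∈ Finset.range k, (A + s • B) ^ i * B * (A + s • B) ^ (k - 1 - i))
      = k • Matrix.trace (B * (A + s • B) ^ (k - 1)) := by
    rw [tCLM_apply, Matrix.trace_sum]
    have : ∀ i ∈ Finset.range k,
        Matrix.trace ((A + s • B) ^ i * B * (A + s • B) ^ (k - 1 - i))
          = Matrix.trace (B * (A + s • B) ^ (k - 1)) := by
      intro i hi
      rw [Finset.mem_range] at hi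
      rw [mul_assoc, Matrix.trace_mul_comm, mul_assoc, ← pow_add]
      have hexp : k - 1 - i + i = k - 1 := by omega
      rw [hexp]
    rw [Finset.sum_congr rfl this, Finset.sum_const, Finset.card_range]
  have h2 : HasDerivAt (fun s : ℝ => Matrix.trace ((A + s • B) ^ k))
      ((tCLM n) (∑ i ∈ Finset.range k, (A + s • B) ^ i * B * (A + s • B) ^ (k - 1 - i))) s := h
  rw [hval] at h2
  exact h2

lemma norm_one_le : ‖(1 : Mat n)‖ ≤ 1 := by
  rw [← Matrix.diagonal_one, Matrix.linfty_opNorm_diagonal]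
  refine (pi_norm_le_iff_of_nonneg zero_le_one).mpr fun i => ?_
  simp

lemma norm_matpow_le (M : Mat n) {x : ℝ} (hx : ‖M‖ ≤ x) (k : ℕ) : ‖M ^ k‖ ≤ x ^ k := by
  have h0 : (0:ℝ) ≤ x := le_trans (norm_nonneg M) hx
  induction k with
  | zero => rw [pow_zero, pow_zero]; exact norm_one_le
  | succ k ih =>
      rw [pow_succ, pow_succ]
      exact le_trans (norm_mul_le _ _) (mul_le_mul ih hx (norm_nonneg M) (pow_nonneg h0 k))

theorem hasDerivAt_trace_exp (A B : Mat n) (s₀ : ℝ) :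
    HasDerivAt (fun s : ℝ => Matrix.trace (NormedSpace.exp (A + s • B)))
      (Matrix.trace (B * NormedSpace.exp (A + s₀ • B))) s₀ := by
  classical
  set R : ℝ := |s₀| + 1 with hR
  set x : ℝ := ‖A‖ + R * ‖B‖ with hx
  have hxnn : (0:ℝ) ≤ x := by positivity
  set g : ℕ → ℝ → ℂ := fun k s => ((Nat.factorial k : ℂ))⁻¹ • Matrix.trace ((A + s • B) ^ k) with hg
  set g' : ℕ → ℝ → ℂ :=
    fun k s => ((Nat.factorial k : ℂ))⁻¹ • (k • Matrix.trace (B * (A + s • B) ^ (k - 1))) with hg'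
  set u : ℕ → ℝ := fun k => (Nat.factorial k : ℝ)⁻¹ * k * (n * ‖B‖ * x ^ (k - 1)) with hu
  have hball : s₀ ∈ Metric.ball (0:ℝ) R := by
    rw [Metric.mem_ball, dist_zero_right, Real.norm_eq_abs, hR]
    linarith
  have hMy : ∀ y ∈ Metric.ball (0:ℝ) R, ‖A + y • B‖ ≤ x := by
    intro y hy
    rw [Metric.mem_ball, dist_zero_right, Real.norm_eq_abs] at hy
    calc ‖A + y • B‖ ≤ ‖A‖ + ‖y • B‖ := norm_add_le _ _
      _ = ‖A‖ + |y| * ‖B‖ := by rw [norm_smul, Real.norm_eq_abs]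
      _ ≤ ‖A‖ + R * ‖B‖ := by
          have := mul_le_mul_of_nonneg_right hy.le (norm_nonneg B)
          linarith
  have hgderiv : ∀ k y, HasDerivAt (g k) (g' k y) y := fun k y =>
    by exact (hasDerivAt_trace_pow A B k y).const_smul ((Nat.factorial k : ℂ))⁻¹
  have hbound : ∀ k, ∀ y ∈ Metric.ball (0:ℝ) R, ‖g' k y‖ ≤ u k := by
    intro k y hy
    rw [hg', hu]
    simp only []
    rw [norm_smul, norm_inv, Complex.norm_natCast, nsmul_eq_mul, norm_mul,
      Complex.norm_natCast]
    rw [mul_assoc]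
    apply mul_le_mul_of_nonneg_left ?_ (by positivity)
    apply mul_le_mul_of_nonneg_left ?_ (by positivity)
    calc ‖Matrix.trace (B * (A + y • B) ^ (k-1))‖ ≤ n * ‖B * (A + y • B) ^ (k-1)‖ :=
          trace_norm_le _
      _ ≤ n * (‖B‖ * ‖(A + y • B) ^ (k-1)‖) :=
          mul_le_mul_of_nonneg_left (norm_mul_le _ _) (by positivity)
      _ ≤ n * (‖B‖ * x ^ (k-1)) := by
          have := norm_matpow_le (A + y • B) (hMy y hy) (k-1)
          have h2 := mul_le_mul_of_nonneg_left this (norm_nonneg B)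
          have h3 := mul_le_mul_of_nonneg_left h2 (by positivity : (0:ℝ) ≤ (n:ℝ))
          simpa [mul_assoc] using h3
      _ = n * ‖B‖ * x ^ (k-1) := by ring
  have husum : Summable u := by
    rw [← summable_nat_add_iff 1]
    have : (fun k => u (k+1)) = fun k => (n * ‖B‖) * (x ^ k / Nat.factorial k) := by
      funext k
      rw [hu]
      simp only [Nat.add_sub_cancel]
      rw [Nat.factorial_succ]
      have h1 : ((k+1 : ℕ) : ℝ) ≠ 0 := Nat.cast_ne_zero.mpr (Nat.succ_ne_zero k)
      have h2 : ((Nat.factorial k : ℕ) : ℝ) ≠ 0 := Nat.cast_ne_zero.mpr (Nat.factorial_ne_zero k)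
      push_cast
      field_simp
    rw [this]
    exact (Real.summable_pow_div_factorial x).mul_left _
  have hexp_sum : ∀ s : ℝ, Summable fun k => ((Nat.factorial k : ℂ))⁻¹ • (A + s • B) ^ k := fun s =>
    NormedSpace.expSeries_summable' (𝕂 := ℂ) (A + s • B)
  have hg0 : Summable fun k => g k s₀ := by
    have := (hexp_sum s₀).map (tCLM n : Mat n →L[ℂ] ℂ) (tCLM n).continuous
    refine this.congr fun k => ?_
    simp only [Function.comp_apply, hg, _root_.map_smul, tCLM_apply]
  have hfun : (fun s : ℝ => Matrix.trace (NormedSpace.exp (A + s • B)))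
      = fun z => ∑' k, g k z := by
    funext s
    rw [NormedSpace.exp_eq_tsum (𝕂 := ℂ), ← tCLM_apply, ContinuousLinearMap.map_tsum _ (hexp_sum s)]
    refine tsum_congr fun k => ?_
    simp only [hg, _root_.map_smul, tCLM_apply]
  have hmain := hasDerivAt_tsum_of_isPreconnected husum Metric.isOpen_ball
    (convex_ball (0:ℝ) R).isPreconnected (fun k y _ => hgderiv k y) hbound hball hg0 hball
  rw [← hfun] at hmain
  have hsum' : Summable fun k => g' k s₀ :=
    Summable.of_norm_bounded husum fun k => hbound k s₀ hball
  have hval : (∑' k, g' k s₀) = Matrix.trace (B * NormedSpace.exp (A + s₀ • B)) := by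
    rw [hsum'.tsum_eq_zero_add]
    have h0 : g' 0 s₀ = 0 := by rw [hg']; simp
    rw [h0, zero_add]
    have hterm : ∀ k : ℕ, g' (k+1) s₀
        = bCLM B (((Nat.factorial k : ℂ))⁻¹ • (A + s₀ • B) ^ k) := by
      intro k
      simp only [hg', _root_.map_smul, bCLM_apply, Nat.add_sub_cancel]
      rw [nsmul_eq_mul, smul_eq_mul, smul_eq_mul, ← mul_assoc]
      congr 1
      have h1 : ((k+1 : ℕ) : ℂ) ≠ 0 := Nat.cast_ne_zero.mpr (Nat.succ_ne_zero k)
      have h2 : ((Nat.factorial k : ℕ) : ℂ) ≠ 0 := Nat.cast_ne_zero.mpr (Nat.factorial_ne_zero k)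
      rw [Nat.factorial_succ]
      have h1' : ((k:ℂ) + 1) ≠ 0 := by push_cast at h1; exact h1
      push_cast
      rw [mul_inv, mul_comm (((k:ℂ)+1))⁻¹ _, mul_assoc, inv_mul_cancel₀ h1', mul_one]
    rw [tsum_congr hterm, ← ContinuousLinearMap.map_tsum _ (hexp_sum s₀), bCLM_apply]
    have hE : NormedSpace.exp (A + s₀ • B)
        = ∑' k : ℕ, ((Nat.factorial k : ℂ))⁻¹ • (A + s₀ • B) ^ k := by
      rw [NormedSpace.exp_eq_tsum (𝕂 := ℂ)]
    rw [hE]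
  rw [hval] at hmain
  exact hmain

end SeriesDeriv

section Assembly

variable {n J K : ℕ}

lemma herm_sum (G : Fin J → Mat n) (c : Fin J → ℝ) (hG : ∀ j, (G j).IsHermitian) :
    (∑ j, (c j : ℂ) • G j).IsHermitian := by
  show _ᴴ = _
  rw [Matrix.conjTranspose_sum]
  refine Finset.sum_congr rfl fun i _ => ?_
  rw [Matrix.conjTranspose_smul, (hG i).eq]
  congr 1
  simp [Complex.star_def, Complex.conj_ofReal]

lemma herm_Gm (G : Fin J → Mat n) (θ : Fin J → ℝ) (hG : ∀ j, (G j).IsHermitian) :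
    (Gm G θ).IsHermitian := herm_sum G θ hG

lemma uH_mul_uH' (H : Fin K → Mat n) (φ : Fin K → ℝ) : uH H φ * uH' H φ = 1 := by
  rw [uH, uH', ← Matrix.exp_add_of_commute (-(Complex.I • Hm H φ)) (Complex.I • Hm H φ) ((Commute.refl _).neg_left), neg_add_cancel]
  exact NormedSpace.exp_zero

lemma uH'_mul_uH (H : Fin K → Mat n) (φ : Fin K → ℝ) : uH' H φ * uH H φ = 1 := by
  rw [uH, uH', ← Matrix.exp_add_of_commute (Complex.I • Hm H φ) (-(Complex.I • Hm H φ)) ((Commute.refl _).neg_right), add_neg_cancel]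
  exact NormedSpace.exp_zero

lemma uH_conjT (H : Fin K → Mat n) (φ : Fin K → ℝ) (hH : ∀ k, (H k).IsHermitian) :
    (uH H φ)ᴴ = uH' H φ := by
  rw [uH, uH', ← Matrix.exp_conjTranspose]
  congr 1
  have hHm : (Hm H φ).IsHermitian := herm_sum H φ hH
  rw [Matrix.conjTranspose_neg, Matrix.conjTranspose_smul, hHm.eq]
  simp [Complex.star_def, Complex.conj_I]

lemma exp_herm {M : Mat n} (hM : M.IsHermitian) :
    NormedSpace.exp M = (hM.eigenvectorUnitary : Mat n) *
      Matrix.diagonal (fun i => (Real.exp (hM.eigenvalues i) : ℂ)) *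
      (hM.eigenvectorUnitary : Mat n)ᴴ := by
  have hV2 : star (hM.eigenvectorUnitary : Mat n) * (hM.eigenvectorUnitary : Mat n) = 1 :=
    (Matrix.mem_unitaryGroup_iff').mp hM.eigenvectorUnitary.2
  have hinv : star (hM.eigenvectorUnitary : Mat n) = (hM.eigenvectorUnitary : Mat n)⁻¹ :=
    (Matrix.inv_eq_left_inv hV2).symm
  have hU : IsUnit (hM.eigenvectorUnitary : Mat n) :=
    ⟨⟨(hM.eigenvectorUnitary : Mat n), star (hM.eigenvectorUnitary : Mat n),
      (Matrix.mem_unitaryGroup_iff).mp hM.eigenvectorUnitary.2, hV2⟩, rfl⟩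
  conv_lhs => rw [hM.spectral_theorem, Unitary.conjStarAlgAut_apply, hinv]
  rw [Matrix.exp_conj _ _ hU, ← hinv, Matrix.star_eq_conjTranspose]
  congr 1
  rw [Matrix.exp_diagonal]
  have : NormedSpace.exp (RCLike.ofReal ∘ hM.eigenvalues)
      = fun i => (Real.exp (hM.eigenvalues i) : ℂ) := by
    funext i
    rw [Pi.coe_exp, ← Complex.exp_eq_exp_ℂ, Function.comp_apply]
    exact (Complex.ofReal_exp _).symm
  rw [this]

lemma trace_conj_diag (V : Mat n) (D : Mat n) (hV2 : Vᴴ * V = 1) :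
    Matrix.trace (V * D * Vᴴ) = Matrix.trace D := by
  rw [mul_assoc, Matrix.trace_mul_comm, mul_assoc, hV2, mul_one]

lemma Zpf_eq (G : Fin J → Mat n) (θ : Fin J → ℝ) (hG : ∀ j, (G j).IsHermitian) :
    Zpf G θ = ∑ i, Real.exp (((herm_Gm G θ hG).neg).eigenvalues i) := by
  have hN : (-(Gm G θ)).IsHermitian := (herm_Gm G θ hG).neg
  have hV2 : (hN.eigenvectorUnitary : Mat n)ᴴ * (hN.eigenvectorUnitary : Mat n) = 1 :=
    (Matrix.mem_unitaryGroup_iff').mp hN.eigenvectorUnitary.2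
  rw [Zpf, exp_herm hN, trace_conj_diag _ _ hV2, Matrix.trace_diagonal]
  rw [Complex.re_sum]
  exact Finset.sum_congr rfl fun i _ => Complex.ofReal_re _

lemma Zpf_pos (hn : 0 < n) (G : Fin J → Mat n) (θ : Fin J → ℝ)
    (hG : ∀ j, (G j).IsHermitian) : 0 < Zpf G θ := by
  rw [Zpf_eq G θ hG]
  haveI : Nonempty (Fin n) := ⟨⟨0, hn⟩⟩
  exact Finset.sum_pos (fun i _ => Real.exp_pos _) Finset.univ_nonempty

lemma smul_conj_diag (V : Mat n) (v : Fin n → ℂ) (c : ℂ) :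
    c • (V * Matrix.diagonal v * Vᴴ) = V * Matrix.diagonal (fun i => c * v i) * Vᴴ := by
  rw [← smul_mul_assoc, ← mul_smul_comm, ← Matrix.diagonal_smul]
  rfl

lemma mlog_eqbm (hn : 0 < n) (G : Fin J → Mat n) (H : Fin K → Mat n)
    (θ : Fin J → ℝ) (φ : Fin K → ℝ)
    (hG : ∀ j, (G j).IsHermitian) (hH : ∀ k, (H k).IsHermitian) :
    mlog (eqbm G H θ φ)
      = uH H φ * ((-(Real.log (Zpf G θ) : ℂ)) • (1 : Mat n) - Gm G θ) * uH' H φ := by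
  have hZ : 0 < Zpf G θ := Zpf_pos hn G θ hG
  have hN : (-(Gm G θ)).IsHermitian := (herm_Gm G θ hG).neg
  have hV1 : (hN.eigenvectorUnitary : Mat n) * (hN.eigenvectorUnitary : Mat n)ᴴ = 1 :=
    (Matrix.mem_unitaryGroup_iff).mp hN.eigenvectorUnitary.2
  have hV2 : (hN.eigenvectorUnitary : Mat n)ᴴ * (hN.eigenvectorUnitary : Mat n) = 1 :=
    (Matrix.mem_unitaryGroup_iff').mp hN.eigenvectorUnitary.2
  set V : Mat n := (hN.eigenvectorUnitary : Mat n) with hVdef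
  set ε : Fin n → ℝ := hN.eigenvalues with hEdef
  set W : Mat n := uH H φ * V with hWdef
  have hWconj : Wᴴ = Vᴴ * uH' H φ := by
    rw [hWdef, Matrix.conjTranspose_mul, uH_conjT H φ hH]
  have hW1 : W * Wᴴ = 1 := by
    rw [hWconj, hWdef, mul_assoc, ← mul_assoc V, hV1, one_mul, uH_mul_uH']
  have hW2 : Wᴴ * W = 1 := by
    rw [hWconj, hWdef, mul_assoc, ← mul_assoc (uH' H φ), uH'_mul_uH, one_mul, hV2]
  have hqbm : eqbm G H θ φ
      = W * Matrix.diagonal (fun i => (((Zpf G θ)⁻¹ * Real.exp (ε i) : ℝ) : ℂ)) * Wᴴ := by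
    rw [eqbm, qbm, exp_herm hN, smul_conj_diag, hWconj, hWdef]
    have : (fun i => ((Zpf G θ : ℂ))⁻¹ * ((Real.exp (ε i) : ℝ) : ℂ))
        = fun i => (((Zpf G θ)⁻¹ * Real.exp (ε i) : ℝ) : ℂ) := by
      funext i; push_cast; ring
    rw [this]
    noncomm_ring
  have hmlog := mlog_conj_diag W (fun i => (Zpf G θ)⁻¹ * Real.exp (ε i)) hW1 hW2
  rw [← hqbm] at hmlog
  have hlog : (fun i => (Real.log ((Zpf G θ)⁻¹ * Real.exp (ε i)) : ℂ))
      = fun i => -(Real.log (Zpf G θ) : ℂ) + (ε i : ℂ) := by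
    funext i
    rw [Real.log_mul (inv_ne_zero hZ.ne') (Real.exp_pos _).ne', Real.log_inv, Real.log_exp]
    push_cast; ring
  rw [hmlog, hlog]
  have hdiag : Matrix.diagonal (fun i => -(Real.log (Zpf G θ) : ℂ) + (ε i : ℂ))
      = (-(Real.log (Zpf G θ) : ℂ)) • (1 : Mat n) + Matrix.diagonal (fun i => (ε i : ℂ)) := by
    have h1 : (-(Real.log (Zpf G θ) : ℂ)) • (1 : Mat n)
        = Matrix.diagonal (fun _ : Fin n => -(Real.log (Zpf G θ) : ℂ)) := by
      rw [← Matrix.diagonal_one]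
      ext i k
      by_cases h : i = k <;> simp [Matrix.diagonal_apply, h]
    rw [h1, ← Matrix.diagonal_add]
  rw [hdiag, hWconj, hWdef]
  have hspec : V * Matrix.diagonal (fun i => (ε i : ℂ)) * Vᴴ = -(Gm G θ) := hN.spectral_theorem.symm
  calc uH H φ * V * ((-(Real.log (Zpf G θ) : ℂ)) • 1 + Matrix.diagonal fun i => (ε i : ℂ))
        * (Vᴴ * uH' H φ)
      = uH H φ * ((-(Real.log (Zpf G θ) : ℂ)) • (V * 1 * Vᴴ)
          + V * Matrix.diagonal (fun i => (ε i : ℂ)) * Vᴴ) * uH' H φ := by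
        noncomm_ring
    _ = uH H φ * ((-(Real.log (Zpf G θ) : ℂ)) • (1 : Mat n) - Gm G θ) * uH' H φ := by
        rw [mul_one, hV1, hspec, sub_eq_add_neg]

lemma relEnt_formula (hn : 0 < n) (G : Fin J → Mat n) (H : Fin K → Mat n)
    (θ : Fin J → ℝ) (φ : Fin K → ℝ)
    (hG : ∀ j, (G j).IsHermitian) (hH : ∀ k, (H k).IsHermitian)
    (η : Mat n) (hηtr : η.trace = 1) :
    relEnt η (eqbm G H θ φ)
      = (Matrix.trace (η * mlog η)).re + Real.log (Zpf G θ)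
        + (Matrix.trace (η * uH H φ * Gm G θ * uH' H φ)).re := by
  rw [relEnt, mul_sub, Matrix.trace_sub, Complex.sub_re, mlog_eqbm hn G H θ φ hG hH]
  have h1 : uH H φ * ((-(Real.log (Zpf G θ) : ℂ)) • (1 : Mat n) - Gm G θ) * uH' H φ
      = (-(Real.log (Zpf G θ) : ℂ)) • (1 : Mat n) - uH H φ * Gm G θ * uH' H φ := by
    rw [mul_sub, sub_mul, mul_smul_comm, smul_mul_assoc, mul_one, uH_mul_uH']
  rw [h1, mul_sub, Matrix.trace_sub, Complex.sub_re]
  have h2 : η * ((-(Real.log (Zpf G θ) : ℂ)) • (1 : Mat n))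
      = (-(Real.log (Zpf G θ) : ℂ)) • η := by rw [mul_smul_comm, mul_one]
  rw [h2, Matrix.trace_smul, hηtr, smul_eq_mul, mul_one, Complex.neg_re, Complex.ofReal_re]
  have h3 : η * (uH H φ * Gm G θ * uH' H φ) = η * uH H φ * Gm G θ * uH' H φ := by
    rw [← mul_assoc, ← mul_assoc]
  rw [h3]
  ring

lemma real_smul_mat (s : ℝ) (X : Mat n) : s • X = (s : ℂ) • X := by
  ext i k
  simp [Matrix.smul_apply, Complex.real_smul]

lemma Gm_update (G : Fin J → Mat n) (θ : Fin J → ℝ) (j : Fin J) (s : ℝ) :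
    Gm G (Function.update θ j s) = Gm G θ + ((s : ℂ) - (θ j : ℂ)) • G j := by
  rw [Gm, Gm]
  have hfun : (fun i => ((Function.update θ j s i : ℝ) : ℂ) • G i)
      = Function.update (fun i => ((θ i : ℝ) : ℂ) • G i) j (((s : ℝ) : ℂ) • G j) := by
    funext i
    by_cases h : i = j
    · subst h; simp
    · simp [Function.update_of_ne h]
  rw [hfun, Finset.sum_update_of_mem (Finset.mem_univ j),
    Finset.sum_eq_sum_sdiff_singleton_add (Finset.mem_univ j)
      (fun i => ((θ i : ℝ) : ℂ) • G i)]
  rw [sub_smul, add_assoc, add_comm ((s:ℂ) • G j), ← add_assoc, add_assoc]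
  congr 1
  abel



/-- Gradient of the quantum relative entropy with respect to the `θ` parameters:
`s ↦ D(η‖ω(θ⟨j↦s⟩, φ))` is differentiable at `s = θ j` with derivative
`⟨G_j⟩_{η(φ)} − ⟨G_j⟩_{ρ(θ)} = Tr[G_j η(φ)] − Tr[G_j ρ(θ)]` (both traces are real). -/
theorem stmt1 {n J K : ℕ} (hn : 1 ≤ n) (hJ : 1 ≤ J) (hK : 1 ≤ K)
    (G : Fin J → Mat n) (H : Fin K → Mat n)
    (hG : ∀ j, (G j).IsHermitian) (hH : ∀ k, (H k).IsHermitian)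
    (η : Mat n) (hη : η.PosDef) (hηtr : η.trace = 1)
    (θ : Fin J → ℝ) (φ : Fin K → ℝ) (j : Fin J) :
    HasDerivAt (fun s : ℝ => relEnt η (eqbm G H (Function.update θ j s) φ))
      ((Matrix.trace (G j * (uH' H φ * η * uH H φ))).re
        - (Matrix.trace (G j * qbm G θ)).re) (θ j) := by
  have hn0 : 0 < n := hn
  set c0 : ℝ := (Matrix.trace (η * mlog η)).re with hc0
  set Kc : ℝ := (Matrix.trace (η * uH H φ * G j * uH' H φ)).re with hKcdef
  set c1 : ℝ := (Matrix.trace (η * uH H φ * Gm G θ * uH' H φ)).re with hc1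
  have hfeq : ∀ s : ℝ, relEnt η (eqbm G H (Function.update θ j s) φ)
      = (c0 + Real.log (Zpf G (Function.update θ j s))) + (c1 + (s - θ j) * Kc) := by
    intro s
    rw [relEnt_formula hn0 G H _ φ hG hH η hηtr, Gm_update]
    have hmul : η * uH H φ * (Gm G θ + ((s:ℂ) - (θ j:ℂ)) • G j) * uH' H φ
        = η * uH H φ * Gm G θ * uH' H φ
          + ((s:ℂ) - (θ j:ℂ)) • (η * uH H φ * G j * uH' H φ) := by
      rw [mul_add, add_mul, mul_smul_comm, smul_mul_assoc]
    rw [hmul, Matrix.trace_add, Complex.add_re]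
    have hsm : (Matrix.trace (((s:ℂ) - (θ j:ℂ)) • (η * uH H φ * G j * uH' H φ))).re
        = (s - θ j) * Kc := by
      rw [Matrix.trace_smul, smul_eq_mul]
      have hc : ((s:ℂ) - (θ j:ℂ)) = ((s - θ j : ℝ) : ℂ) := by push_cast; ring
      rw [hc, Complex.re_ofReal_mul, hKcdef]
    rw [hsm]
  set A : Mat n := -(Gm G θ) + (θ j : ℂ) • G j with hA
  set B : Mat n := -(G j) with hB
  have hAB : ∀ s : ℝ, -(Gm G (Function.update θ j s)) = A + s • B := by
    intro s
    rw [Gm_update, real_smul_mat, hA, hB]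
    rw [sub_smul, smul_neg]
    abel
  have hupdate : Function.update θ j (θ j) = θ := Function.update_eq_self j θ
  have hABθ : A + (θ j : ℝ) • B = -(Gm G θ) := by rw [← hAB (θ j), hupdate]
  have hZder : HasDerivAt (fun s : ℝ => Zpf G (Function.update θ j s))
      ((Matrix.trace (B * NormedSpace.exp (-(Gm G θ)))).re) (θ j) := by
    have hZfun : (fun s : ℝ => Zpf G (Function.update θ j s))
        = fun s : ℝ => (Matrix.trace (NormedSpace.exp (A + s • B))).re := by
      funext s
      rw [Zpf, hAB s]
    rw [hZfun]
    have h := hasDerivAt_trace_exp A B (θ j)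
    rw [hABθ] at h
    exact Complex.reCLM.hasFDerivAt.comp_hasDerivAt (θ j) h
  have hZθ : 0 < Zpf G θ := Zpf_pos hn0 G θ hG
  have hlogder : HasDerivAt (fun s : ℝ => Real.log (Zpf G (Function.update θ j s)))
      ((Zpf G θ)⁻¹ * (Matrix.trace (B * NormedSpace.exp (-(Gm G θ)))).re) (θ j) := by
    have hne : Zpf G (Function.update θ j (θ j)) ≠ 0 := by rw [hupdate]; exact hZθ.ne'
    have hlog := Real.hasDerivAt_log hne
    have hcomp := hlog.comp (θ j) hZder
    rw [hupdate] at hcomp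
    exact hcomp
  have hlin : HasDerivAt (fun s : ℝ => c1 + (s - θ j) * Kc) Kc (θ j) := by
    simpa using (((hasDerivAt_id (θ j)).sub_const (θ j)).mul_const Kc).const_add c1
  have htot := ((hasDerivAt_const (θ j) c0).add hlogder).add hlin
  have hKc : Kc = (Matrix.trace (G j * (uH' H φ * η * uH H φ))).re := by
    rw [hKcdef]
    congr 1
    rw [Matrix.trace_mul_comm (η * uH H φ * G j) (uH' H φ), ← mul_assoc, ← mul_assoc]
    exact Matrix.trace_mul_comm _ (G j)
  have hq : (Matrix.trace (G j * qbm G θ)).re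
      = (Zpf G θ)⁻¹ * (Matrix.trace (G j * NormedSpace.exp (-(Gm G θ)))).re := by
    rw [qbm, mul_smul_comm, Matrix.trace_smul, smul_eq_mul, ← Complex.ofReal_inv,
      Complex.re_ofReal_mul]
  have hBtr : (Matrix.trace (B * NormedSpace.exp (-(Gm G θ)))).re
      = -(Matrix.trace (G j * NormedSpace.exp (-(Gm G θ)))).re := by
    rw [hB, neg_mul, Matrix.trace_neg, Complex.neg_re]
  have hfun2 : (fun s : ℝ => relEnt η (eqbm G H (Function.update θ j s) φ))
      = fun s : ℝ => (c0 + Real.log (Zpf G (Function.update θ j s))) + (c1 + (s - θ j) * Kc) :=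
    funext hfeq
  rw [hfun2]
  refine HasDerivAt.congr_deriv (((hasDerivAt_const (θ j) c0).add hlogder).add hlin) ?_
  rw [hKc, hq, hBtr]
  ring

end Assembly

end
end

section
/- Fix γ ∈ ℝ^L and a direction u ∈ ℝ^L, and assume the maps ε ↦ −2·ln F(σ(γ), σ(γ+ε)) and ε ↦ −2·ln F_H(σ(γ), σ(γ+ε)) are twice continuously differentiable on a neighborhood of ε = 0. Writing f_FB(s) := −2·ln F(σ(γ), σ(γ+s·u)) and f_WY(s) := −2·ln F_H(σ(γ), σ(γ+s·u)), the second derivatives at s = 0 satisfy f_WY''(0) ≥ f_FB''(0) ≥ (1/2)·f_WY''(0); that is, the Wigner–Yanase and Fisher–Bures information matrices of the family satisfy I^WY(γ) ⪰ I^FB(γ) ⪰ (1/2)·I^WY(γ) in the Loewner order. -/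
open MeasureTheory Matrix
open scoped ComplexOrder Classical

noncomputable section

attribute [local instance] Matrix.normedAddCommGroup Matrix.normedSpace

/-- The positive semidefinite square root of a positive semidefinite matrix
(junk value `0` otherwise). -/
def msqrt {n : ℕ} (A : Mat n) : Mat n := if h : A.PosSemidef then
  (h.1.eigenvectorUnitary : Mat n) * diagonal ((↑) ∘ Real.sqrt ∘ h.1.eigenvalues) *
    (star (h.1.eigenvectorUnitary : Mat n)) else 0

/-- The Uhlmann fidelity `F(ω,τ) = (Tr[√(√ω τ √ω)])²`. -/
def uFid {n : ℕ} (A B : Mat n) : ℝ := ((msqrt (msqrt A * B * msqrt A)).trace).re ^ 2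

/-- The Holevo fidelity `F_H(ω,τ) = (Tr[√ω √τ])²`. -/
def hFid {n : ℕ} (A B : Mat n) : ℝ := ((msqrt A * msqrt B).trace).re ^ 2

/-- The standard basis vector `e_i` of `ℝ^L`. -/
def stdBasis {L : ℕ} (i : Fin L) : Fin L → ℝ := Pi.single i 1

/-- The mixed second partial derivative `∂²g/∂ε_i∂ε_j` at `0`: the derivative at `0` of
`s ↦ (derivative at 0 of t ↦ g (s·e_i + t·e_j))`. -/
def mixed2 {L : ℕ} (g : (Fin L → ℝ) → ℝ) (i j : Fin L) : ℝ :=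
  deriv (fun s : ℝ => deriv (fun t : ℝ => g (s • stdBasis i + t • stdBasis j)) 0) 0

/-- `⟨x, y⟩ = ∑ m, conj (x m) * y m`. -/
def dotc {n : ℕ} (x y : Fin n → ℂ) : ℂ := ∑ m, (starRingEnd ℂ) (x m) * y m

section Aux

variable {n : ℕ}

open scoped MatrixOrder in
lemma msqrt_eq_sqrt {A : Mat n} (h : A.PosSemidef) : msqrt A = CFC.sqrt A := by
  rw [CFC.sqrt_eq_real_sqrt A h.nonneg, cfcₙ_eq_cfc (hf := Real.continuous_sqrt.continuousOn) (hf0 := Real.sqrt_zero), h.1.cfc_eq, msqrt, dif_pos h]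
  rfl

open scoped MatrixOrder in
lemma msqrt_psd {A : Mat n} (h : A.PosSemidef) : (msqrt A).PosSemidef := by
  rw [msqrt_eq_sqrt h]; exact Matrix.nonneg_iff_posSemidef.mp (CFC.sqrt_nonneg A)

open scoped MatrixOrder in
lemma msqrt_mul_self {A : Mat n} (h : A.PosSemidef) : msqrt A * msqrt A = A := by
  rw [msqrt_eq_sqrt h]; exact CFC.sqrt_mul_sqrt_self A h.nonneg

lemma msqrt_herm {A : Mat n} (h : A.PosSemidef) : (msqrt A)ᴴ = msqrt A :=
  (msqrt_psd h).1

lemma trace_conj_unitary (U : Matrix.unitaryGroup (Fin n) ℂ) (D : Mat n) :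
    ((U : Mat n) * D * star (U : Mat n)).trace = D.trace := by
  rw [Matrix.trace_mul_cycle, Matrix.UnitaryGroup.star_mul_self U, Matrix.one_mul]

lemma MMH_eq {A B : Mat n} (hA : A.PosSemidef) (hB : B.PosSemidef) :
    msqrt A * B * msqrt A = (msqrt A * msqrt B) * (msqrt A * msqrt B)ᴴ := by
  rw [Matrix.conjTranspose_mul, msqrt_herm hA, msqrt_herm hB]
  calc msqrt A * B * msqrt A = msqrt A * (msqrt B * msqrt B) * msqrt A := by
        rw [msqrt_mul_self hB]
    _ = msqrt A * msqrt B * (msqrt B * msqrt A) := by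
        simp only [Matrix.mul_assoc]

lemma key1 {A B : Mat n} (hA : A.PosDef) (hB : B.PosDef) :
    ((msqrt A * msqrt B).trace).re ≤ ((msqrt (msqrt A * B * msqrt A)).trace).re := by
  set M := msqrt A * msqrt B with hM
  have hMK : msqrt A * B * msqrt A = M * Mᴴ := MMH_eq hA.posSemidef hB.posSemidef
  rw [hMK]
  have hK : (M * Mᴴ).PosSemidef := Matrix.posSemidef_self_mul_conjTranspose M
  set d := hK.1.eigenvalues with hd
  set U := hK.1.eigenvectorUnitary with hU
  have u₁ : star (U : Mat n) * (U : Mat n) = 1 := Matrix.UnitaryGroup.star_mul_self U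
  have u₂ : (U : Mat n) * star (U : Mat n) = 1 := Matrix.mem_unitaryGroup_iff.mp U.2
  have hsq : msqrt (M * Mᴴ)
      = (U : Mat n) * Matrix.diagonal ((↑) ∘ Real.sqrt ∘ d) * star (U : Mat n) := by
    rw [msqrt, dif_pos hK]
  have htr1 : (msqrt (M * Mᴴ)).trace.re = ∑ i, Real.sqrt (d i) := by
    rw [hsq, trace_conj_unitary, Matrix.trace_diagonal]
    rw [show ∑ i, ((↑) ∘ Real.sqrt ∘ d) i = ((∑ i, Real.sqrt (d i) : ℝ) : ℂ) by push_cast; rfl]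
    exact Complex.ofReal_re _
  set N := star (U : Mat n) * M * (U : Mat n) with hN
  have htrN : N.trace = M.trace := by
    rw [hN, Matrix.trace_mul_cycle, ← Matrix.mul_assoc, u₂, Matrix.one_mul]
  have hNN : N * Nᴴ = Matrix.diagonal ((↑) ∘ d) := by
    have h1 : N * Nᴴ = star (U : Mat n) * (M * Mᴴ) * (U : Mat n) := by
      rw [hN]
      simp only [Matrix.conjTranspose_mul, Matrix.conjTranspose_conjTranspose,
        Matrix.star_eq_conjTranspose, Matrix.mul_assoc]
      have u₂' : (U : Mat n) * (U : Mat n)ᴴ = 1 := by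
        rw [← Matrix.star_eq_conjTranspose]; exact u₂
      rw [show (U : Mat n) * ((U:Mat n)ᴴ * (Mᴴ * (U:Mat n)))
           = Mᴴ * (U:Mat n) by rw [← Matrix.mul_assoc, u₂', Matrix.one_mul]]
    rw [h1]
    conv_lhs => rw [hK.1.spectral_theorem, Unitary.conjStarAlgAut_apply]
    simp only [← Matrix.mul_assoc]
    rw [u₁, Matrix.one_mul, Matrix.mul_assoc, u₁, Matrix.mul_one]
    rfl
  have hrow : ∀ i, ∑ j, Complex.normSq (N i j) = d i := by
    intro i
    have h2 := congrFun (congrFun hNN i) i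
    rw [Matrix.mul_apply, Matrix.diagonal_apply_eq] at h2
    have h3 : ∀ j, N i j * Nᴴ j i = (Complex.normSq (N i j) : ℂ) := by
      intro j
      rw [Matrix.conjTranspose_apply, ← Complex.mul_conj]
      rfl
    simp only [h3] at h2
    have := congrArg Complex.re h2
    rwa [Complex.re_sum] at this
  calc M.trace.re = N.trace.re := by rw [htrN]
    _ = ∑ i, (N i i).re := by rw [Matrix.trace, Complex.re_sum]; rfl
    _ ≤ ∑ i, Real.sqrt (d i) := by
        refine Finset.sum_le_sum fun i _ => ?_
        have h1 : (N i i).re ≤ ‖N i i‖ := Complex.re_le_norm _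
        have h3 : Complex.normSq (N i i) ≤ d i := by
          rw [← hrow i]
          exact Finset.single_le_sum (fun j _ => Complex.normSq_nonneg _) (Finset.mem_univ i)
        refine h1.trans ?_
        rw [Complex.norm_def]
        exact Real.sqrt_le_sqrt h3
    _ = (msqrt (M * Mᴴ)).trace.re := htr1.symm


lemma trace_eq_sum_eig {C : Mat n} (hC : C.IsHermitian) :
    C.trace = ((∑ i, hC.eigenvalues i : ℝ) : ℂ) := by
  conv_lhs => rw [hC.spectral_theorem, Unitary.conjStarAlgAut_apply]
  rw [trace_conj_unitary, Matrix.trace_diagonal]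
  push_cast
  rfl

lemma trace_re_nonneg {C : Mat n} (hC : C.PosSemidef) : 0 ≤ C.trace.re := by
  rw [trace_eq_sum_eig hC.1, Complex.ofReal_re]
  exact Finset.sum_nonneg fun i _ => hC.eigenvalues_nonneg i

lemma trace_re_pos {C : Mat n} (hn : 0 < n) (hC : C.PosSemidef) (hd : C.det ≠ 0) :
    0 < C.trace.re := by
  have hpos : ∀ i, 0 < hC.1.eigenvalues i := by
    intro i
    rcases lt_or_eq_of_le (hC.eigenvalues_nonneg i) with h | h
    · exact h
    · exfalso
      apply hd
      rw [hC.1.det_eq_prod_eigenvalues]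
      exact Finset.prod_eq_zero (Finset.mem_univ i) (by rw [← h]; norm_num)
  rw [trace_eq_sum_eig hC.1, Complex.ofReal_re]
  have : Nonempty (Fin n) := Fin.pos_iff_nonempty.mp hn
  exact Finset.sum_pos (fun i _ => hpos i) Finset.univ_nonempty


lemma trace_CS (X Y : Mat n) :
    ‖(Xᴴ * Y).trace‖ ≤ Real.sqrt ((Xᴴ * X).trace.re) * Real.sqrt ((Yᴴ * Y).trace.re) := by
  set x : EuclideanSpace ℂ (Fin n × Fin n) :=
    (WithLp.equiv 2 ((Fin n × Fin n) → ℂ)).symm (fun p => X p.2 p.1) with hxdef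
  set y : EuclideanSpace ℂ (Fin n × Fin n) :=
    (WithLp.equiv 2 ((Fin n × Fin n) → ℂ)).symm (fun p => Y p.2 p.1) with hydef
  have hinner : (inner ℂ x y : ℂ) = (Xᴴ * Y).trace := by
    simp only [PiLp.inner_apply, RCLike.inner_apply, hxdef, hydef, WithLp.equiv_symm_apply, PiLp.toLp_apply,
      Matrix.trace, Matrix.diag, Matrix.mul_apply, Matrix.conjTranspose_apply,
      Fintype.sum_prod_type]
    exact Finset.sum_congr rfl fun i _ => Finset.sum_congr rfl fun j _ => mul_comm _ _
  have hnx : ‖x‖ = Real.sqrt ((Xᴴ * X).trace.re) := by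
    rw [EuclideanSpace.norm_eq]
    congr 1
    simp only [Matrix.trace, Matrix.diag, Matrix.mul_apply, Matrix.conjTranspose_apply,
      Complex.re_sum, hxdef, WithLp.equiv_symm_apply, PiLp.toLp_apply, Fintype.sum_prod_type]
    congr 1; ext i; congr 1; ext j
    rw [Complex.sq_norm]
    simp [Complex.normSq_apply, Complex.mul_re]
  have hny : ‖y‖ = Real.sqrt ((Yᴴ * Y).trace.re) := by
    rw [EuclideanSpace.norm_eq]
    congr 1
    simp only [Matrix.trace, Matrix.diag, Matrix.mul_apply, Matrix.conjTranspose_apply,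
      Complex.re_sum, hydef, WithLp.equiv_symm_apply, PiLp.toLp_apply, Fintype.sum_prod_type]
    congr 1; ext i; congr 1; ext j
    rw [Complex.sq_norm]
    simp [Complex.normSq_apply, Complex.mul_re]
  calc ‖(Xᴴ * Y).trace‖ = ‖(inner ℂ x y : ℂ)‖ := by rw [hinner]
    _ ≤ ‖x‖ * ‖y‖ := norm_inner_le_norm x y
    _ = _ := by rw [hnx, hny]

open scoped MatrixOrder in
lemma msqrt_unique {A B : Mat n} (hB : B.PosSemidef) (hBA : B * B = A) : msqrt A = B := by
  have hA : A.PosSemidef := by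
    have := Matrix.posSemidef_conjTranspose_mul_self B
    rwa [hB.1, hBA] at this
  rw [msqrt_eq_sqrt hA]
  exact CFC.sqrt_unique hBA hB.nonneg

lemma msqrt_det_ne_zero {A : Mat n} (hA : A.PosDef) : (msqrt A).det ≠ 0 := by
  intro h
  have := congrArg Matrix.det (msqrt_mul_self hA.posSemidef)
  rw [Matrix.det_mul, h, mul_zero] at this
  exact hA.det_pos.ne' this.symm

lemma key2 {A B : Mat n} (hA : A.PosDef) (hB : B.PosDef)
    (hTA : A.trace = 1) (hTB : B.trace = 1) :
    (((msqrt (msqrt A * B * msqrt A)).trace).re) ^ 2 ≤ ((msqrt A * msqrt B).trace).re := by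
  have hsA : (msqrt A).PosSemidef := msqrt_psd hA.posSemidef
  have hsB : (msqrt B).PosSemidef := msqrt_psd hB.posSemidef
  set P := msqrt (msqrt A) with hPdef
  set Q := msqrt (msqrt B) with hQdef
  have hPP : P * P = msqrt A := msqrt_mul_self hsA
  have hQQ : Q * Q = msqrt B := msqrt_mul_self hsB
  have hPh : Pᴴ = P := msqrt_herm hsA
  have hQh : Qᴴ = Q := msqrt_herm hsB
  set M := msqrt A * msqrt B with hM
  have hMK : msqrt A * B * msqrt A = M * Mᴴ := MMH_eq hA.posSemidef hB.posSemidef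
  rw [hMK]
  have hK : (M * Mᴴ).PosSemidef := Matrix.posSemidef_self_mul_conjTranspose M
  set H := msqrt (M * Mᴴ) with hHdef
  have hHpsd : H.PosSemidef := msqrt_psd hK
  have hHh : Hᴴ = H := msqrt_herm hK
  have hHH : H * H = M * Mᴴ := msqrt_mul_self hK
  -- H is invertible
  have hdetM : M.det ≠ 0 := by
    rw [hM, Matrix.det_mul]
    exact mul_ne_zero (msqrt_det_ne_zero hA) (msqrt_det_ne_zero hB)
  have hdetH : H.det ≠ 0 := by
    intro h
    have := congrArg Matrix.det hHH
    rw [Matrix.det_mul, h, mul_zero, Matrix.det_mul, Matrix.det_conjTranspose] at this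
    exact hdetM (by
      have : M.det * star M.det = 0 := this.symm
      rcases mul_eq_zero.mp this with h' | h'
      · exact h'
      · simpa using congrArg star h')
  have hdetHu : IsUnit H.det := isUnit_iff_ne_zero.mpr hdetH
  have hHinv : H * H⁻¹ = 1 := Matrix.mul_nonsing_inv H hdetHu
  have hHinv' : H⁻¹ * H = 1 := Matrix.nonsing_inv_mul H hdetHu
  have hHinvh : (H⁻¹)ᴴ = H⁻¹ := by rw [Matrix.conjTranspose_nonsing_inv, hHh]
  set V := Mᴴ * H⁻¹ with hVdef
  have hVh : Vᴴ = H⁻¹ * M := by rw [hVdef, Matrix.conjTranspose_mul, hHinvh,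
    Matrix.conjTranspose_conjTranspose]
  have hVV : Vᴴ * V = 1 := by
    rw [hVh, hVdef]
    calc H⁻¹ * M * (Mᴴ * H⁻¹) = H⁻¹ * (M * Mᴴ) * H⁻¹ := by simp only [Matrix.mul_assoc]
      _ = H⁻¹ * (H * H) * H⁻¹ := by rw [hHH]
      _ = (H⁻¹ * H) * (H * H⁻¹) := by simp only [Matrix.mul_assoc]
      _ = 1 := by rw [hHinv, hHinv', Matrix.one_mul]
  have hVVh : V * Vᴴ = 1 := mul_eq_one_comm.mp hVV
  have hMV : M * V = H := by
    rw [hVdef, ← Matrix.mul_assoc, ← hHH, Matrix.mul_assoc, hHinv, Matrix.mul_one]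
  -- the two Cauchy–Schwarz steps
  have hMPQ : M = P * P * (Q * Q) := by rw [hM, hPP, hQQ]
  have htP4 : (P * P * (P * P)).trace = 1 := by
    rw [show P * P * (P * P) = A by rw [hPP]; exact msqrt_mul_self hA.posSemidef]
    exact hTA
  have htQ4 : (Q * Q * (Q * Q)).trace = 1 := by
    rw [show Q * Q * (Q * Q) = B by rw [hQQ]; exact msqrt_mul_self hB.posSemidef]
    exact hTB
  -- trace H = trace ((Q*P)ᴴ * (Q * V * P))
  have htrH : H.trace = ((Q * P)ᴴ * (Q * V * P)).trace := by
    rw [← hMV, hMPQ, Matrix.conjTranspose_mul, hPh, hQh]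
    have e : P * P * (Q * Q) * V = P * (P * (Q * (Q * V))) := by simp only [Matrix.mul_assoc]
    rw [e, Matrix.trace_mul_comm]
    congr 1
    simp only [Matrix.mul_assoc]
  -- CS step 1
  have hX : ((Q*P)ᴴ * (Q*P)).trace = M.trace := by
    rw [Matrix.conjTranspose_mul, hPh, hQh, hMPQ]
    have e : P * Q * (Q * P) = (P * (Q * Q)) * P := by simp only [Matrix.mul_assoc]
    rw [e, Matrix.trace_mul_comm]
    congr 1
    simp only [Matrix.mul_assoc]
  have hr := trace_CS (Q * P) (Q * V * P)
  rw [← htrH, hX] at hr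
  -- bound (Yᴴ Y).trace.re ≤ 1
  have hYY : ((Q*V*P)ᴴ * (Q*V*P)).trace = ((P*P)ᴴ * (Vᴴ * (Q*Q) * V)).trace := by
    simp only [Matrix.conjTranspose_mul, hPh, hQh, Matrix.conjTranspose_conjTranspose]
    have e : P * (Vᴴ * Q) * (Q * V * P) = (P * (Vᴴ * (Q * (Q * V)))) * P := by
      simp only [Matrix.mul_assoc]
    rw [e, Matrix.trace_mul_comm]
    congr 1
    simp only [Matrix.mul_assoc]
  have hY2Y2 : ((Vᴴ*(Q*Q)*V)ᴴ * (Vᴴ*(Q*Q)*V)).trace = 1 := by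
    have e1 : (Vᴴ*(Q*Q)*V)ᴴ = Vᴴ*(Q*Q)*V := by
      simp only [Matrix.conjTranspose_mul, hQh, Matrix.conjTranspose_conjTranspose]
      simp only [Matrix.mul_assoc]
    rw [e1]
    have c1 : Vᴴ*(Q*Q)*V * (Vᴴ*(Q*Q)*V) = Vᴴ * (Q*Q) * (V * Vᴴ) * ((Q*Q)*V) := by
      simp only [Matrix.mul_assoc]
    rw [c1, hVVh, Matrix.mul_one]
    have c2 : Vᴴ * (Q*Q) * ((Q*Q)*V) = Vᴴ * ((Q*Q) * ((Q*Q)*V)) := by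
      simp only [Matrix.mul_assoc]
    rw [c2, Matrix.trace_mul_comm]
    have c3 : (Q*Q) * ((Q*Q)*V) * Vᴴ = (Q*Q*(Q*Q)) * (V * Vᴴ) := by
      simp only [Matrix.mul_assoc]
    rw [c3, hVVh, Matrix.mul_one, htQ4]
  have hrY := trace_CS (P*P) (Vᴴ*(Q*Q)*V)
  rw [show ((P*P)ᴴ * (P*P)).trace = 1 by rw [Matrix.conjTranspose_mul, hPh]; exact htP4] at hrY
  rw [hY2Y2] at hrY
  simp only [Complex.one_re, Real.sqrt_one, one_mul, mul_one] at hrY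
  have hrY' : ((Q*V*P)ᴴ * (Q*V*P)).trace.re ≤ 1 := by
    rw [hYY]
    exact le_trans (Complex.re_le_norm _) hrY
  -- combine
  have hHre : 0 ≤ H.trace.re := trace_re_nonneg hHpsd
  have hMre : 0 ≤ M.trace.re := by
    have : ((Q*P)ᴴ * (Q*P)).PosSemidef := Matrix.posSemidef_conjTranspose_mul_self _
    have := trace_re_nonneg this
    rwa [hX] at this
  have hYre : 0 ≤ ((Q*V*P)ᴴ * (Q*V*P)).trace.re :=
    trace_re_nonneg (Matrix.posSemidef_conjTranspose_mul_self _)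
  have step : H.trace.re ≤ Real.sqrt (M.trace.re) := by
    calc H.trace.re ≤ ‖H.trace‖ := Complex.re_le_norm _
      _ ≤ Real.sqrt (M.trace.re) * Real.sqrt (((Q*V*P)ᴴ * (Q*V*P)).trace.re) := hr
      _ ≤ Real.sqrt (M.trace.re) * 1 := by
          refine mul_le_mul_of_nonneg_left ?_ (Real.sqrt_nonneg _)
          simpa using Real.sqrt_le_sqrt hrY'
      _ = Real.sqrt (M.trace.re) := mul_one _
  calc (H.trace.re) ^ 2 ≤ (Real.sqrt (M.trace.re)) ^ 2 := by
        exact pow_le_pow_left₀ hHre step 2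
    _ = M.trace.re := Real.sq_sqrt hMre

lemma hFid_self {A : Mat n} (hA : A.PosDef) (hTA : A.trace = 1) : hFid A A = 1 := by
  rw [hFid, msqrt_mul_self hA.posSemidef, hTA]
  norm_num

lemma uFid_self {A : Mat n} (hA : A.PosDef) (hTA : A.trace = 1) : uFid A A = 1 := by
  rw [uFid]
  have hS := msqrt_mul_self hA.posSemidef
  have h1 : msqrt A * A * msqrt A = A * A := by
    nth_rewrite 2 [← hS]
    rw [show msqrt A * (msqrt A * msqrt A) * msqrt A
        = (msqrt A * msqrt A) * (msqrt A * msqrt A) by simp only [Matrix.mul_assoc], hS]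
  rw [h1, msqrt_unique hA.posSemidef rfl, hTA]
  norm_num

lemma trace_sqrts_pos (hn : 0 < n) {A B : Mat n} (hA : A.PosDef) (hB : B.PosDef) :
    0 < ((msqrt A * msqrt B).trace).re := by
  set P := msqrt (msqrt A) with hPdef
  have hsA : (msqrt A).PosSemidef := msqrt_psd hA.posSemidef
  have hPP : P * P = msqrt A := msqrt_mul_self hsA
  have hPh : Pᴴ = P := msqrt_herm hsA
  have h1 : (msqrt A * msqrt B).trace = (Pᴴ * msqrt B * P).trace := by
    rw [hPh, ← hPP, Matrix.mul_assoc, Matrix.trace_mul_comm]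
  rw [h1]
  refine trace_re_pos hn ((msqrt_psd hB.posSemidef).conjTranspose_mul_mul_same P) ?_
  have hd : (msqrt A).det ≠ 0 := msqrt_det_ne_zero hA
  have hPdet : P.det ≠ 0 := by
    intro h
    apply hd
    rw [← hPP, Matrix.det_mul, h, mul_zero]
  simp only [Matrix.det_mul, Matrix.det_conjTranspose]
  refine mul_ne_zero (mul_ne_zero ?_ (msqrt_det_ne_zero hB)) hPdet
  simpa using hPdet


lemma second_deriv_nonneg {h : ℝ → ℝ} (hh : ContDiffAt ℝ 2 h 0) (h0 : h 0 = 0)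
    (hnn : ∀ s, 0 ≤ h s) : 0 ≤ deriv (deriv h) 0 := by
  by_contra hcon
  push_neg at hcon
  obtain ⟨U, hUmem, hCD⟩ := hh.contDiffOn le_rfl (by simp)
  obtain ⟨a, b, hab, hsub⟩ := mem_nhds_iff_exists_Ioo_subset.mp hUmem
  have hI : IsOpen (Set.Ioo a b) := isOpen_Ioo
  have hCD' : ContDiffOn ℝ 2 h (Set.Ioo a b) := hCD.mono hsub
  have hd1 : ContDiffOn ℝ 1 (deriv h) (Set.Ioo a b) :=
    hCD'.deriv_of_isOpen hI (by norm_num)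
  have hcont2 : ContinuousOn (deriv (deriv h)) (Set.Ioo a b) :=
    hd1.continuousOn_deriv_of_isOpen hI le_rfl
  have hcont1 : ContinuousOn (deriv h) (Set.Ioo a b) := hd1.continuousOn
  have hconth : ContinuousOn h (Set.Ioo a b) := hCD'.continuousOn
  have h'0 : deriv h 0 = 0 := by
    have hmin : IsLocalMin h 0 := Filter.Eventually.of_forall fun s => by rw [h0]; exact hnn s
    exact hmin.deriv_eq_zero
  -- find a smaller interval where deriv (deriv h) < 0
  have hc0 : ContinuousAt (deriv (deriv h)) 0 := hcont2.continuousAt (hI.mem_nhds hab)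
  have hev : {x | deriv (deriv h) x < 0} ∈ nhds (0:ℝ) := hc0 (Iio_mem_nhds hcon)
  obtain ⟨c, e, hce, hsub2⟩ := mem_nhds_iff_exists_Ioo_subset.mp
    (Filter.inter_mem hev (hI.mem_nhds hab))
  have hJI : Set.Ioo c e ⊆ Set.Ioo a b := fun x hx => (hsub2 hx).2
  have hneg : ∀ x ∈ Set.Ioo c e, deriv (deriv h) x < 0 := fun x hx => (hsub2 hx).1
  have hanti : StrictAntiOn (deriv h) (Set.Ioo c e) := by
    refine strictAntiOn_of_deriv_neg (convex_Ioo c e) (hcont1.mono hJI) ?_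
    intro x hx
    rw [interior_Ioo] at hx
    exact hneg x hx
  set s := e / 2 with hs
  have hs0 : 0 < s := by simp [hs]; linarith [hce.2]
  have hse : s < e := by simp [hs]; linarith [hce.2]
  have hsJ : s ∈ Set.Ioo c e := ⟨lt_trans hce.1 hs0, hse⟩
  have h0J : (0:ℝ) ∈ Set.Ioo c e := hce
  -- deriv h < 0 on (0, s]
  have hdneg : ∀ x ∈ Set.Ioo (0:ℝ) s, deriv h x < 0 := by
    intro x hx
    have hxJ : x ∈ Set.Ioo c e := ⟨lt_trans hce.1 hx.1, lt_trans hx.2 hse⟩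
    have := hanti h0J hxJ hx.1
    rwa [h'0] at this
  have hantih : StrictAntiOn h (Set.Icc 0 s) := by
    refine strictAntiOn_of_deriv_neg (convex_Icc 0 s) ?_ ?_
    · refine hconth.mono ?_
      intro x hx
      exact hJI ⟨lt_of_lt_of_le hce.1 hx.1, lt_of_le_of_lt hx.2 hse⟩
    · intro x hx
      rw [interior_Icc] at hx
      exact hdneg x hx
  have := hantih (Set.left_mem_Icc.mpr hs0.le) (Set.right_mem_Icc.mpr hs0.le) hs0
  rw [h0] at this
  exact absurd (hnn s) (by linarith)

lemma d2_comb {f g : ℝ → ℝ} (a b : ℝ) (hf : ContDiffAt ℝ 2 f 0) (hg : ContDiffAt ℝ 2 g 0) :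
    deriv (deriv (fun s => a * f s + b * g s)) 0
      = a * deriv (deriv f) 0 + b * deriv (deriv g) 0 := by
  obtain ⟨Uf, hUf, hCDf⟩ := hf.contDiffOn le_rfl (by simp)
  obtain ⟨Ug, hUg, hCDg⟩ := hg.contDiffOn le_rfl (by simp)
  obtain ⟨c, e, hce, hsub⟩ := mem_nhds_iff_exists_Ioo_subset.mp (Filter.inter_mem hUf hUg)
  have hI : IsOpen (Set.Ioo c e) := isOpen_Ioo
  have hCDf' : ContDiffOn ℝ 2 f (Set.Ioo c e) := hCDf.mono fun x hx => (hsub hx).1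
  have hCDg' : ContDiffOn ℝ 2 g (Set.Ioo c e) := hCDg.mono fun x hx => (hsub hx).2
  have hdf : ∀ x ∈ Set.Ioo c e, DifferentiableAt ℝ f x := fun x hx =>
    ((hCDf'.differentiableOn (by norm_num)).differentiableAt (hI.mem_nhds hx))
  have hdg : ∀ x ∈ Set.Ioo c e, DifferentiableAt ℝ g x := fun x hx =>
    ((hCDg'.differentiableOn (by norm_num)).differentiableAt (hI.mem_nhds hx))
  have hev : deriv (fun s => a * f s + b * g s)
      =ᶠ[nhds 0] (fun s => a * deriv f s + b * deriv g s) := by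
    refine Filter.eventually_of_mem (hI.mem_nhds hce) fun x hx => ?_
    rw [deriv_fun_add ((hdf x hx).const_mul a) ((hdg x hx).const_mul b),
      deriv_const_mul a (hdf x hx), deriv_const_mul b (hdg x hx)]
  have hdf1 : DifferentiableAt ℝ (deriv f) 0 := by
    have := (hCDf'.deriv_of_isOpen (m := 1) hI (by norm_num)).differentiableOn one_ne_zero
    exact this.differentiableAt (hI.mem_nhds hce)
  have hdg1 : DifferentiableAt ℝ (deriv g) 0 := by
    have := (hCDg'.deriv_of_isOpen (m := 1) hI (by norm_num)).differentiableOn one_ne_zero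
    exact this.differentiableAt (hI.mem_nhds hce)
  rw [hev.deriv_eq]
  rw [deriv_fun_add (hdf1.const_mul a) (hdg1.const_mul b),
    deriv_const_mul a hdf1, deriv_const_mul b hdg1]

end Aux

/-- The Fisher–Bures and Wigner–Yanase information matrices differ by at most a factor of two
in the Loewner order: along every direction `u`, writing
`f_FB(s) = −2 ln F(σ(γ), σ(γ+s·u))` and `f_WY(s) = −2 ln F_H(σ(γ), σ(γ+s·u))`, one has
`f_WY''(0) ≥ f_FB''(0) ≥ (1/2) f_WY''(0)`; i.e. `I^WY(γ) ⪰ I^FB(γ) ⪰ (1/2) I^WY(γ)`. -/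
theorem stmt7 {n L : ℕ} (hn : 1 ≤ n) (hL : 1 ≤ L)
    (σ : (Fin L → ℝ) → Mat n)
    (hσC : ContDiff ℝ 2 σ)
    (hσs : ∀ γ, (σ γ).PosDef ∧ (σ γ).trace = 1)
    (γ : Fin L → ℝ) (u : Fin L → ℝ)
    (hFB : ContDiffAt ℝ 2 (fun ε : Fin L → ℝ => -2 * Real.log (uFid (σ γ) (σ (γ + ε)))) 0)
    (hWY : ContDiffAt ℝ 2 (fun ε : Fin L → ℝ => -2 * Real.log (hFid (σ γ) (σ (γ + ε)))) 0) :
    deriv (deriv (fun s : ℝ => -2 * Real.log (uFid (σ γ) (σ (γ + s • u))))) 0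
      ≤ deriv (deriv (fun s : ℝ => -2 * Real.log (hFid (σ γ) (σ (γ + s • u))))) 0
    ∧ (1 / 2 : ℝ) * deriv (deriv (fun s : ℝ => -2 * Real.log (hFid (σ γ) (σ (γ + s • u))))) 0
      ≤ deriv (deriv (fun s : ℝ => -2 * Real.log (uFid (σ γ) (σ (γ + s • u))))) 0 := by
  have hn0 : 0 < n := hn
  set f : ℝ → ℝ := fun s => -2 * Real.log (uFid (σ γ) (σ (γ + s • u))) with hfdef
  set g : ℝ → ℝ := fun s => -2 * Real.log (hFid (σ γ) (σ (γ + s • u))) with hgdef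
  have hA : (σ γ).PosDef := (hσs γ).1
  have hTA : (σ γ).trace = 1 := (hσs γ).2
  -- smoothness of the sections
  have hφ : ContDiff ℝ 2 (fun s : ℝ => s • u) := contDiff_id.smul contDiff_const
  have cf : ContDiffAt ℝ 2 f 0 := by
    have h1 : ContDiffAt ℝ 2 (fun ε : Fin L → ℝ => -2 * Real.log (uFid (σ γ) (σ (γ + ε))))
        ((fun s : ℝ => s • u) 0) := by simpa using hFB
    exact ContDiffAt.comp (f := fun s : ℝ => s • u) 0 h1 hφ.contDiffAt
  have cg : ContDiffAt ℝ 2 g 0 := by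
    have h1 : ContDiffAt ℝ 2 (fun ε : Fin L → ℝ => -2 * Real.log (hFid (σ γ) (σ (γ + ε))))
        ((fun s : ℝ => s • u) 0) := by simpa using hWY
    exact ContDiffAt.comp (f := fun s : ℝ => s • u) 0 h1 hφ.contDiffAt
  -- values at 0
  have hB0 : σ (γ + (0:ℝ) • u) = σ γ := by rw [zero_smul, add_zero]
  have hf0 : f 0 = 0 := by
    rw [hfdef]
    simp only [hB0, uFid_self hA hTA, Real.log_one, mul_zero]
  have hg0 : g 0 = 0 := by
    rw [hgdef]
    simp only [hB0, hFid_self hA hTA, Real.log_one, mul_zero]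
  -- pointwise inequalities
  have hpt : ∀ s : ℝ, f s ≤ g s ∧ g s ≤ 2 * f s := by
    intro s
    have hB : (σ (γ + s • u)).PosDef := (hσs _).1
    have hTB : (σ (γ + s • u)).trace = 1 := (hσs _).2
    set x := ((msqrt (σ γ) * msqrt (σ (γ + s • u))).trace).re with hxdef
    set y := ((msqrt (msqrt (σ γ) * (σ (γ + s • u)) * msqrt (σ γ))).trace).re with hydef
    have hx : 0 < x := trace_sqrts_pos hn0 hA hB
    have hxy : x ≤ y := key1 hA hB
    have hyx : y ^ 2 ≤ x := key2 hA hB hTA hTB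
    have hy : 0 < y := lt_of_lt_of_le hx hxy
    have hfs : f s = -2 * Real.log (y ^ 2) := rfl
    have hgs : g s = -2 * Real.log (x ^ 2) := rfl
    constructor
    · rw [hfs, hgs]
      have hlog : Real.log (x ^ 2) ≤ Real.log (y ^ 2) :=
        Real.log_le_log (by positivity) (pow_le_pow_left₀ hx.le hxy 2)
      linarith
    · rw [hfs, hgs]
      have h4 : (y ^ 2) ^ 2 ≤ x ^ 2 := pow_le_pow_left₀ (by positivity) hyx 2
      have hlog : Real.log ((y ^ 2) ^ 2) ≤ Real.log (x ^ 2) :=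
        Real.log_le_log (by positivity) h4
      rw [Real.log_pow] at hlog
      push_cast at hlog
      linarith
  -- first inequality
  have H1 : 0 ≤ deriv (deriv (fun s => 1 * g s + (-1) * f s)) 0 := by
    refine second_deriv_nonneg ?_ (by rw [hf0, hg0]; ring) ?_
    · exact (contDiffAt_const.mul cg).add (contDiffAt_const.mul cf)
    · intro s
      have := (hpt s).1
      linarith
  have E1 := d2_comb (f := g) (g := f) 1 (-1) cg cf
  rw [E1] at H1
  -- second inequality
  have H2 : 0 ≤ deriv (deriv (fun s => 2 * f s + (-1) * g s)) 0 := by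
    refine second_deriv_nonneg ?_ (by rw [hf0, hg0]; ring) ?_
    · exact (contDiffAt_const.mul cf).add (contDiffAt_const.mul cg)
    · intro s
      have := (hpt s).2
      linarith
  have E2 := d2_comb (f := f) (g := g) 2 (-1) cf cg
  rw [E2] at H2
  constructor
  · linarith
  · linarith

end
end

section
/- For all i ∈ {1,…,J} and j ∈ {1,…,K}: Σ_{k,ℓ=1}^n (2/(λ_k+λ_ℓ)) ⟨v_k, Pθ_i v_ℓ⟩ ⟨v_ℓ, Pφ_j v_k⟩ = i·Tr[[Φ_θ(G_i), Ψ_φ†(H_j)] ρ(θ)]; that is, the Fisher–Bures information matrix elements of the evolved quantum Boltzmann machine with respect to mixed θ and φ parameters are I^FB_{ij}(θ,φ) = i⟨[Φ_θ(G_i),Ψ_φ†(H_j)]⟩_{ρ(θ)}. -/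
open MeasureTheory Matrix

noncomputable section

attribute [local instance] Matrix.normedAddCommGroup Matrix.normedSpace

/-- The high-peak-tent probability density `p(t) = (2/π) ln |coth (π t / 2)|`. -/
def hpt (t : ℝ) : ℝ :=
  (2 / Real.pi) * Real.log |Real.cosh (Real.pi * t / 2) / Real.sinh (Real.pi * t / 2)|

/-- The channel `Φ_θ(X) = ∫ℝ p(t) exp(−iG(θ)t) X exp(iG(θ)t) dt`. -/
def chanΦ {n J : ℕ} (G : Fin J → Mat n) (θ : Fin J → ℝ) (X : Mat n) : Mat n :=
  ∫ t : ℝ, hpt t •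
    (NormedSpace.exp ((-(Complex.I * (t : ℂ))) • Gm G θ) * X *
      NormedSpace.exp ((Complex.I * (t : ℂ)) • Gm G θ))

/-- The channel `Ψ_φ(X) = ∫₀¹ exp(−iH(φ)t) X exp(iH(φ)t) dt`. -/
def chanΨ {n K : ℕ} (H : Fin K → Mat n) (φ : Fin K → ℝ) (X : Mat n) : Mat n :=
  ∫ t in (0:ℝ)..1,
    (NormedSpace.exp ((-(Complex.I * (t : ℂ))) • Hm H φ) * X *
      NormedSpace.exp ((Complex.I * (t : ℂ)) • Hm H φ))

/-- The adjoint channel `Ψ_φ†(X) = ∫₀¹ exp(iH(φ)t) X exp(−iH(φ)t) dt`. -/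
def chanΨdag {n K : ℕ} (H : Fin K → Mat n) (φ : Fin K → ℝ) (X : Mat n) : Mat n :=
  ∫ t in (0:ℝ)..1,
    (NormedSpace.exp ((Complex.I * (t : ℂ)) • Hm H φ) * X *
      NormedSpace.exp ((-(Complex.I * (t : ℂ))) • Hm H φ))

/-- The eigenvalues `λ_k = exp(−μ_k)/(∑_m exp(−μ_m))` of `ρ(θ)`. -/
def lamd {n : ℕ} (μ : Fin n → ℝ) (k : Fin n) : ℝ := Real.exp (-μ k) / ∑ m, Real.exp (-μ m)

/-- The partial derivative of `ω(θ,φ)` with respect to `θ_j`: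
`Pθ_j = −(1/2){exp(−iH(φ)) Φ_θ(G_j) exp(iH(φ)), ω(θ,φ)} + ⟨G_j⟩_{ρ(θ)} ω(θ,φ)`. -/
def Pθ {n J K : ℕ} (G : Fin J → Mat n) (H : Fin K → Mat n)
    (θ : Fin J → ℝ) (φ : Fin K → ℝ) (j : Fin J) : Mat n :=
  -(1 / 2 : ℂ) •
      (uH H φ * chanΦ G θ (G j) * uH' H φ * eqbm G H θ φ
        + eqbm G H θ φ * (uH H φ * chanΦ G θ (G j) * uH' H φ))
    + Matrix.trace (G j * qbm G θ) • eqbm G H θ φ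

/-- The partial derivative of `ω(θ,φ)` with respect to `φ_k`: `Pφ_k = i[ω(θ,φ), Ψ_φ(H_k)]`. -/
def Pφ {n J K : ℕ} (G : Fin J → Mat n) (H : Fin K → Mat n)
    (θ : Fin J → ℝ) (φ : Fin K → ℝ) (k : Fin K) : Mat n :=
  Complex.I • (eqbm G H θ φ * chanΨ H φ (H k) - chanΨ H φ (H k) * eqbm G H θ φ)

/-- The coefficient `c(x,y) = (ln x − ln y)/(x − y)` for `x ≠ y`, and `c(x,x) = 1/x`. -/
def cKM (x y : ℝ) : ℝ := if x = y then 1 / x else (Real.log x - Real.log y) / (x - y)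

namespace QBMaux

lemma matexp_cont {n : ℕ} (M : Mat n) (c : ℂ) :
    Continuous fun t : ℝ => NormedSpace.exp ((c * (t : ℂ)) • M) := by
  letI : SeminormedRing (Mat n) := Matrix.linftyOpSemiNormedRing
  letI : NormedRing (Mat n) := Matrix.linftyOpNormedRing
  letI : NormedAlgebra ℂ (Mat n) := Matrix.linftyOpNormedAlgebra
  let +nondep : NormedAlgebra ℚ (Mat n) := .restrictScalars ℚ ℂ (Mat n)
  have h1 : Continuous (NormedSpace.exp : Mat n → Mat n) :=
    @NormedSpace.exp_continuous (Mat n) _ _ (FiniteDimensional.complete ℂ (Mat n))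
  exact h1.comp ((continuous_const.mul Complex.continuous_ofReal).smul continuous_const)

lemma matexp_mul {n : ℕ} (M : Mat n) (a b : ℂ) :
    NormedSpace.exp (a • M) * NormedSpace.exp (b • M)
      = NormedSpace.exp ((a + b) • M) := by
  rw [add_smul, Matrix.exp_add_of_commute _ _ (((Commute.refl M).smul_left a).smul_right b)]

lemma conj_chanPsi {n K : ℕ} (H : Fin K → Mat n) (φ : Fin K → ℝ) (X : Mat n) :
    uH' H φ * chanΨ H φ X * uH H φ = chanΨdag H φ X := by
  have hcont : Continuous fun t : ℝ =>
      NormedSpace.exp ((-(Complex.I * (t : ℂ))) • Hm H φ) * X *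
        NormedSpace.exp ((Complex.I * (t : ℂ)) • Hm H φ) := by
    have h1 := matexp_cont (Hm H φ) (-Complex.I)
    have h2 := matexp_cont (Hm H φ) Complex.I
    simp only [neg_mul] at h1
    exact (h1.matrix_mul continuous_const).matrix_mul h2
  have hint : @IntervalIntegrable (Mat n) _ NormedAddGroup.toENormedAddMonoid (fun t : ℝ =>
      NormedSpace.exp ((-(Complex.I * (t : ℂ))) • Hm H φ) * X *
        NormedSpace.exp ((Complex.I * (t : ℂ)) • Hm H φ)) volume (0:ℝ) 1 :=
    hcont.intervalIntegrable 0 1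
  let L : Mat n →L[ℂ] Mat n := LinearMap.toContinuousLinearMap
    { toFun := fun Y => uH' H φ * Y * uH H φ
      map_add' := by intros; noncomm_ring
      map_smul' := by intros; simp [Matrix.mul_smul, Matrix.smul_mul] }
  have hL : uH' H φ * chanΨ H φ X * uH H φ = L (chanΨ H φ X) := rfl
  rw [hL, chanΨ]
  erw [← L.intervalIntegral_comp_comm hint]
  have hpt : ∀ t : ℝ,
      L (NormedSpace.exp ((-(Complex.I * (t : ℂ))) • Hm H φ) * X *
          NormedSpace.exp ((Complex.I * (t : ℂ)) • Hm H φ))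
        = (fun s : ℝ => NormedSpace.exp ((Complex.I * (s : ℂ)) • Hm H φ) * X *
            NormedSpace.exp ((-(Complex.I * (s : ℂ))) • Hm H φ)) (1 - t) := by
    intro t
    show uH' H φ * (NormedSpace.exp ((-(Complex.I * (t : ℂ))) • Hm H φ) * X *
          NormedSpace.exp ((Complex.I * (t : ℂ)) • Hm H φ)) * uH H φ = _
    rw [uH, uH', ← neg_smul]
    calc NormedSpace.exp (Complex.I • Hm H φ) *
          (NormedSpace.exp ((-(Complex.I * (t : ℂ))) • Hm H φ) * X *
            NormedSpace.exp ((Complex.I * (t : ℂ)) • Hm H φ)) *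
          NormedSpace.exp ((-Complex.I) • Hm H φ)
        = (NormedSpace.exp (Complex.I • Hm H φ) *
            NormedSpace.exp ((-(Complex.I * (t : ℂ))) • Hm H φ)) * X *
          (NormedSpace.exp ((Complex.I * (t : ℂ)) • Hm H φ) *
            NormedSpace.exp ((-Complex.I) • Hm H φ)) := by noncomm_ring
      _ = _ := by
          rw [matexp_mul, matexp_mul]
          congr 2
          · congr 1; push_cast; ring
          · congr 1; push_cast; ring
  erw [intervalIntegral.integral_congr (g := fun t : ℝ =>
      (fun s : ℝ => NormedSpace.exp ((Complex.I * (s : ℂ)) • Hm H φ) * X *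
        NormedSpace.exp ((-(Complex.I * (s : ℂ))) • Hm H φ)) (1 - t))
      (fun t _ => hpt t)]
  have := intervalIntegral.integral_comp_sub_left (a := (0:ℝ)) (b := 1)
      (fun s : ℝ => NormedSpace.exp ((Complex.I * (s : ℂ)) • Hm H φ) * X *
        NormedSpace.exp ((-(Complex.I * (s : ℂ))) • Hm H φ)) 1
  rw [chanΨdag]
  norm_num at this
  simpa using this

lemma dotc_conj {n : ℕ} (Q M : Mat n) (k l : Fin n) :
    dotc (fun a => Q a k) (M.mulVec fun a => Q a l) = (Qᴴ * M * Q) k l := by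
  simp only [dotc, Matrix.mul_apply, Matrix.mulVec, Matrix.conjTranspose_apply, dotProduct,
    Finset.mul_sum, Finset.sum_mul]
  rw [Finset.sum_comm]
  apply Finset.sum_congr rfl; intro a _
  apply Finset.sum_congr rfl; intro b _
  rw [Complex.star_def]
  ring

end QBMaux

/-- Fisher–Bures information matrix elements of the evolved quantum Boltzmann machine with
respect to mixed `θ` and `φ` parameters:
`I^FB_{ij}(θ,φ) = i⟨[Φ_θ(G_i),Ψ_φ†(H_j)]⟩_{ρ(θ)}`. -/
theorem stmt11 {n J K : ℕ} (hn : 1 ≤ n) (hJ : 1 ≤ J) (hK : 1 ≤ K)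
    (G : Fin J → Mat n) (H : Fin K → Mat n)
    (hG : ∀ j, (G j).IsHermitian) (hH : ∀ k, (H k).IsHermitian)
    (θ : Fin J → ℝ) (φ : Fin K → ℝ)
    (u : Fin n → Fin n → ℂ) (μ : Fin n → ℝ)
    (hortho : ∀ k l, dotc (u k) (u l) = if k = l then 1 else 0)
    (heig : ∀ k, (Gm G θ).mulVec (u k) = (μ k : ℂ) • u k)
    (i : Fin J) (j : Fin K) :
    ∑ k, ∑ l, ((2 / (lamd μ k + lamd μ l) : ℝ) : ℂ) *
        dotc ((uH H φ).mulVec (u k)) ((Pθ G H θ φ i).mulVec ((uH H φ).mulVec (u l))) *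
        dotc ((uH H φ).mulVec (u l)) ((Pφ G H θ φ j).mulVec ((uH H φ).mulVec (u k)))
      = Complex.I *
          Matrix.trace ((chanΦ G θ (G i) * chanΨdag H φ (H j)
            - chanΨdag H φ (H j) * chanΦ G θ (G i)) * qbm G θ) := by
  classical
  have hn0 : 0 < n := hn
  haveI : Nonempty (Fin n) := ⟨⟨0, hn0⟩⟩
  -- basis change matrix
  set P : Mat n := Matrix.of fun r k => u k r with hPdef
  have hPP : Pᴴ * P = 1 := by
    ext k l
    simpa [Matrix.mul_apply, Matrix.conjTranspose_apply, dotc, hPdef, Matrix.one_apply,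
      Complex.star_def] using hortho k l
  have hPP' : P * Pᴴ = 1 := mul_eq_one_comm.mp hPP
  have hPinv : P⁻¹ = Pᴴ := Matrix.inv_eq_left_inv hPP
  have hPunit : IsUnit P := ⟨⟨P, Pᴴ, hPP', hPP⟩, rfl⟩
  have hp1 : ∀ X : Mat n, Pᴴ * (P * X) = X := fun X => by
    rw [← Matrix.mul_assoc, hPP, Matrix.one_mul]
  have hp2 : ∀ X : Mat n, P * (Pᴴ * X) = X := fun X => by
    rw [← Matrix.mul_assoc, hPP', Matrix.one_mul]
  -- unitaries
  have hHm : (Hm H φ)ᴴ = Hm H φ := by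
    rw [Hm, Matrix.conjTranspose_sum]
    refine Finset.sum_congr rfl fun k _ => ?_
    rw [Matrix.conjTranspose_smul, (hH k).eq, Complex.star_def, Complex.conj_ofReal]
  have hU'U : uH' H φ * uH H φ = 1 := by
    rw [uH, uH', ← neg_smul, QBMaux.matexp_mul]
    simp [NormedSpace.exp_zero]
  have hUU' : uH H φ * uH' H φ = 1 := by
    rw [uH, uH', ← neg_smul, QBMaux.matexp_mul]
    simp [NormedSpace.exp_zero]
  have hu1 : ∀ X : Mat n, uH' H φ * (uH H φ * X) = X := fun X => by
    rw [← Matrix.mul_assoc, hU'U, Matrix.one_mul]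
  have hUadj : (uH H φ)ᴴ = uH' H φ := by
    rw [uH, uH', ← Matrix.exp_conjTranspose]
    congr 1
    rw [Matrix.conjTranspose_neg, Matrix.conjTranspose_smul, hHm]
    simp [Complex.star_def, Complex.conj_I]
  -- diagonalization of Gm
  set D : Mat n := Matrix.diagonal fun k => (μ k : ℂ) with hDdef
  have hGP : Gm G θ * P = P * D := by
    ext r k
    have h := congrFun (heig k) r
    simp only [Matrix.mulVec, dotProduct, Pi.smul_apply, smul_eq_mul] at h
    rw [hDdef, Matrix.mul_diagonal, Matrix.mul_apply]
    simp only [hPdef, Matrix.of_apply]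
    rw [h]; ring
  have hGm : Gm G θ = P * D * Pᴴ := by
    have h2 : Gm G θ * (P * Pᴴ) = P * D * Pᴴ := by rw [← Matrix.mul_assoc, hGP]
    rwa [hPP', Matrix.mul_one] at h2
  set E : Mat n := Matrix.diagonal fun k => ((Real.exp (-μ k) : ℝ) : ℂ) with hEdef
  have hED : NormedSpace.exp (-D) = E := by
    have h3 : (-D : Mat n) = Matrix.diagonal fun k => ((-μ k : ℝ) : ℂ) := by
      rw [hDdef, Matrix.diagonal_neg]
      exact congrArg Matrix.diagonal (funext fun k => by push_cast; ring)
    rw [h3, Matrix.exp_diagonal, hEdef]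
    refine congrArg Matrix.diagonal ?_
    rw [Pi.exp_def]
    funext k
    show NormedSpace.exp (((-μ k : ℝ)) : ℂ) = ((Real.exp (-μ k) : ℝ) : ℂ)
    rw [← Complex.exp_eq_exp_ℂ]
    exact (Complex.ofReal_exp (-μ k)).symm
  have hexpG : NormedSpace.exp (-(Gm G θ)) = P * E * Pᴴ := by
    have h1 : -(Gm G θ) = P * (-D) * P⁻¹ := by
      rw [hPinv, hGm, Matrix.mul_neg, Matrix.neg_mul]
    rw [h1, Matrix.exp_conj P (-D) hPunit, hPinv, hED]
  -- partition function and state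
  have hZ : Zpf G θ = ∑ m, Real.exp (-μ m) := by
    rw [Zpf, hexpG, Matrix.trace_mul_cycle, hPP, Matrix.one_mul, hEdef,
      Matrix.trace_diagonal]
    rw [show (∑ m, ((Real.exp (-μ m) : ℝ) : ℂ)) = ((∑ m, Real.exp (-μ m) : ℝ) : ℂ) by
      norm_cast]
    exact Complex.ofReal_re _
  set Dl : Mat n := Matrix.diagonal fun m => ((lamd μ m : ℝ) : ℂ) with hDldef
  have hρ : qbm G θ = P * Dl * Pᴴ := by
    rw [qbm, hexpG, hZ]
    have h4 : Dl = ((∑ m, Real.exp (-μ m) : ℝ) : ℂ)⁻¹ • E := by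
      rw [hDldef, hEdef, ← Matrix.diagonal_smul]
      refine congrArg Matrix.diagonal ?_
      funext m
      show ((lamd μ m : ℝ) : ℂ) = ((∑ m, Real.exp (-μ m) : ℝ) : ℂ)⁻¹ * ((Real.exp (-μ m) : ℝ) : ℂ)
      rw [lamd]
      push_cast
      rw [div_eq_inv_mul]
    rw [h4]
    simp [Matrix.smul_mul, Matrix.mul_smul]
  have hρP : Pᴴ * (qbm G θ * P) = Dl := by
    rw [hρ]
    simp only [Matrix.mul_assoc, hPP, Matrix.mul_one]
    exact hp1 Dl
  -- conjugation by Q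
  set Q : Mat n := uH H φ * P with hQdef
  have hQadj : Qᴴ = Pᴴ * uH' H φ := by rw [hQdef, Matrix.conjTranspose_mul, hUadj]
  have hQ2 : ∀ X : Mat n, Q * (Qᴴ * X) = X := fun X => by
    rw [hQadj, hQdef]
    simp only [Matrix.mul_assoc]
    rw [← Matrix.mul_assoc P Pᴴ, hPP', Matrix.one_mul, ← Matrix.mul_assoc, hUU',
      Matrix.one_mul]
  have hτmul : ∀ X Y : Mat n, Qᴴ * (X * Y) * Q = (Qᴴ * X * Q) * (Qᴴ * Y * Q) := fun X Y => by
    simp only [Matrix.mul_assoc, hQ2]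
  have hτρ : Qᴴ * eqbm G H θ φ * Q = Dl := by
    rw [eqbm, hQadj, hQdef]
    simp only [Matrix.mul_assoc, hu1]
    exact hρP
  set At : Mat n := Pᴴ * (chanΦ G θ (G i) * P) with hAtdef
  set Bt : Mat n := Pᴴ * (chanΨdag H φ (H j) * P) with hBtdef
  have hτA : Qᴴ * (uH H φ * chanΦ G θ (G i) * uH' H φ) * Q = At := by
    rw [hQadj, hQdef, hAtdef]
    simp only [Matrix.mul_assoc, hu1]
  have hτB : Qᴴ * chanΨ H φ (H j) * Q = Bt := by
    rw [hQadj, hQdef, hBtdef]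
    calc Pᴴ * uH' H φ * chanΨ H φ (H j) * (uH H φ * P)
        = Pᴴ * ((uH' H φ * chanΨ H φ (H j) * uH H φ) * P) := by
          simp only [Matrix.mul_assoc]
      _ = Pᴴ * (chanΨdag H φ (H j) * P) := by rw [QBMaux.conj_chanPsi]
  -- conjugated derivative matrices
  have hKθ : Qᴴ * Pθ G H θ φ i * Q
      = -(1/2 : ℂ) • (At * Dl + Dl * At) + (Matrix.trace (G i * qbm G θ)) • Dl := by
    simp only [Pθ]
    simp only [Matrix.mul_add, Matrix.add_mul, Matrix.mul_smul, Matrix.smul_mul]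
    rw [hτmul, hτA, hτmul, hτA, hτρ]
  have hKφ : Qᴴ * Pφ G H θ φ j * Q = Complex.I • (Dl * Bt - Bt * Dl) := by
    simp only [Pφ]
    simp only [Matrix.mul_sub, Matrix.sub_mul, Matrix.mul_smul, Matrix.smul_mul]
    rw [hτmul, hτmul, hτρ, hτB]
  -- dot products as matrix entries
  have hcol : ∀ m : Fin n, (uH H φ).mulVec (u m) = fun a => Q a m := by
    intro m; funext a
    rw [hQdef]
    simp [Matrix.mulVec, dotProduct, Matrix.mul_apply, hPdef, Matrix.of_apply]
  have hdot : ∀ (M : Mat n) (k l : Fin n),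
      dotc ((uH H φ).mulVec (u k)) (M.mulVec ((uH H φ).mulVec (u l)))
        = (Qᴴ * M * Q) k l := by
    intro M k l
    rw [hcol, hcol]
    exact QBMaux.dotc_conj Q M k l
  -- positivity
  have hlpos : ∀ m : Fin n, 0 < lamd μ m := by
    intro m
    have hS : 0 < ∑ m, Real.exp (-μ m) :=
      Finset.sum_pos (fun m _ => Real.exp_pos _) Finset.univ_nonempty
    exact div_pos (Real.exp_pos _) hS
  -- per-term identity
  have hterm : ∀ k l : Fin n,
      ((2 / (lamd μ k + lamd μ l) : ℝ) : ℂ) * (Qᴴ * Pθ G H θ φ i * Q) k l *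
          (Qᴴ * Pφ G H θ φ j * Q) l k
        = Complex.I * ((((lamd μ k : ℝ) : ℂ) - ((lamd μ l : ℝ) : ℂ)) * (At k l * Bt l k)) := by
    intro k l
    rw [hKθ, hKφ, hDldef]
    simp only [Matrix.add_apply, Matrix.sub_apply, Matrix.smul_apply, Matrix.mul_diagonal,
      Matrix.diagonal_mul, smul_eq_mul, Matrix.diagonal_apply]
    push_cast
    by_cases hkl : k = l
    · subst hkl
      simp only [if_pos rfl]
      ring
    · rw [if_neg hkl]
      have hne : ((lamd μ k : ℝ) : ℂ) + ((lamd μ l : ℝ) : ℂ) ≠ 0 := by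
        rw [show ((lamd μ k : ℝ) : ℂ) + ((lamd μ l : ℝ) : ℂ)
            = ((lamd μ k + lamd μ l : ℝ) : ℂ) by push_cast; ring]
        exact_mod_cast ne_of_gt (add_pos (hlpos k) (hlpos l))
      field_simp [hne]
      ring
  -- trace identities
  have htr1 : Matrix.trace (chanΦ G θ (G i) * (chanΨdag H φ (H j) * qbm G θ))
      = ∑ k, ∑ l, At k l * (Bt l k * ((lamd μ k : ℝ) : ℂ)) := by
    have e1 : At * (Bt * Dl) = Pᴴ * (chanΦ G θ (G i) * (chanΨdag H φ (H j) * (P * Dl))) := by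
      rw [hAtdef, hBtdef]
      simp only [Matrix.mul_assoc, hp2]
    have e2 : Matrix.trace (At * (Bt * Dl))
        = Matrix.trace (chanΦ G θ (G i) * (chanΨdag H φ (H j) * qbm G θ)) := by
      rw [e1, Matrix.trace_mul_comm, hρ]
      simp only [Matrix.mul_assoc]
    rw [← e2]
    rw [hDldef]
    simp only [Matrix.trace, Matrix.diag_apply, Matrix.mul_apply, Matrix.mul_diagonal,
      Matrix.diagonal_apply, mul_ite, mul_zero, Finset.sum_ite_eq', Finset.mem_univ, if_true]
  have htr2 : Matrix.trace (chanΨdag H φ (H j) * (chanΦ G θ (G i) * qbm G θ))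
      = ∑ l, ∑ k, Bt l k * (At k l * ((lamd μ l : ℝ) : ℂ)) := by
    have e1 : Bt * (At * Dl) = Pᴴ * (chanΨdag H φ (H j) * (chanΦ G θ (G i) * (P * Dl))) := by
      rw [hAtdef, hBtdef]
      simp only [Matrix.mul_assoc, hp2]
    have e2 : Matrix.trace (Bt * (At * Dl))
        = Matrix.trace (chanΨdag H φ (H j) * (chanΦ G θ (G i) * qbm G θ)) := by
      rw [e1, Matrix.trace_mul_comm, hρ]
      simp only [Matrix.mul_assoc]
    rw [← e2]
    rw [hDldef]
    simp only [Matrix.trace, Matrix.diag_apply, Matrix.mul_apply, Matrix.mul_diagonal,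
      Matrix.diagonal_apply, mul_ite, mul_zero, Finset.sum_ite_eq', Finset.mem_univ, if_true]
  -- assemble
  calc ∑ k, ∑ l, ((2 / (lamd μ k + lamd μ l) : ℝ) : ℂ) *
        dotc ((uH H φ).mulVec (u k)) ((Pθ G H θ φ i).mulVec ((uH H φ).mulVec (u l))) *
        dotc ((uH H φ).mulVec (u l)) ((Pφ G H θ φ j).mulVec ((uH H φ).mulVec (u k)))
      = ∑ k, ∑ l, Complex.I *
          ((((lamd μ k : ℝ) : ℂ) - ((lamd μ l : ℝ) : ℂ)) * (At k l * Bt l k)) := by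
        refine Finset.sum_congr rfl fun k _ => Finset.sum_congr rfl fun l _ => ?_
        rw [hdot, hdot]
        exact hterm k l
    _ = Complex.I * ((∑ k, ∑ l, At k l * (Bt l k * ((lamd μ k : ℝ) : ℂ)))
          - ∑ k, ∑ l, Bt l k * (At k l * ((lamd μ l : ℝ) : ℂ))) := by
        rw [mul_sub, Finset.mul_sum, Finset.mul_sum, ← Finset.sum_sub_distrib]
        refine Finset.sum_congr rfl fun k _ => ?_
        rw [Finset.mul_sum, Finset.mul_sum, ← Finset.sum_sub_distrib]
        refine Finset.sum_congr rfl fun l _ => ?_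
        ring
    _ = Complex.I * Matrix.trace ((chanΦ G θ (G i) * chanΨdag H φ (H j)
          - chanΨdag H φ (H j) * chanΦ G θ (G i)) * qbm G θ) := by
        rw [Matrix.sub_mul, Matrix.trace_sub]
        rw [Matrix.mul_assoc, Matrix.mul_assoc, htr1, htr2]
        rw [Finset.sum_comm (f := fun l k => Bt l k * (At k l * ((lamd μ l : ℝ) : ℂ)))]

end
end
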